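/- arXiv:2306.12730 — 5 statements merged into one kernel-verified Lean document; each statement's English description precedes it below -/
import Mathlib

section
/- For any skew-symmetric real d×d matrices E₁ and E₂, the matrix exponential is 1-Lipschitz in Frobenius norm: ‖exp(E₂) − exp(E₁)‖_F ≤ ‖E₂ − E₁‖_F. -/
open Matrix

/-- The Frobenius norm of a real matrix. -/
noncomputable def frobNorm {m n : Type*} [Fintype m] [Fintype n]
    (A : Matrix m n ℝ) : ℝ :=
  Real.sqrt (∑ i, ∑ j, (A i j) ^ 2)

section aux

open NormedSpace

attribute [local instance] Matrix.frobeniusNormedAddCommGroup Matrix.frobeniusNormedSpace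
  Matrix.frobeniusNormedRing Matrix.frobeniusNormedAlgebra Matrix.frobeniusIsBoundedSMul

variable {d : ℕ}

lemma frobNorm_eq_norm (A : Matrix (Fin d) (Fin d) ℝ) : frobNorm A = ‖A‖ := by
  rw [frobNorm, Matrix.frobenius_norm_def, ← Real.sqrt_eq_rpow]
  congr 1
  refine Finset.sum_congr rfl fun i _ => Finset.sum_congr rfl fun j _ => ?_
  rw [show ((2:ℝ)) = ((2:ℕ):ℝ) by norm_num, Real.rpow_natCast, Real.norm_eq_abs, sq_abs]

lemma frob_norm_eq_trace (A : Matrix (Fin d) (Fin d) ℝ) :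
    ‖A‖ = Real.sqrt ((Aᵀ * A).trace) := by
  rw [← frobNorm_eq_norm, frobNorm]
  congr 1
  simp only [trace, diag, mul_apply, transpose_apply, sq]
  exact Finset.sum_comm

lemma frob_orth_left {Q A : Matrix (Fin d) (Fin d) ℝ} (hQ : Qᵀ * Q = 1) :
    ‖Q * A‖ = ‖A‖ := by
  rw [frob_norm_eq_trace, frob_norm_eq_trace A, transpose_mul]
  congr 2
  calc Aᵀ * Qᵀ * (Q * A) = Aᵀ * (Qᵀ * Q) * A := by noncomm_ring
  _ = Aᵀ * A := by rw [hQ, mul_one]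

lemma frob_orth_right {Q A : Matrix (Fin d) (Fin d) ℝ} (hQ : Q * Qᵀ = 1) :
    ‖A * Q‖ = ‖A‖ := by
  rw [frob_norm_eq_trace, frob_norm_eq_trace A, transpose_mul]
  congr 1
  rw [show Qᵀ * Aᵀ * (A * Q) = Qᵀ * (Aᵀ * A * Q) by noncomm_ring,
    Matrix.trace_mul_comm, mul_assoc, hQ, mul_one]

lemma exp_orth_left {E : Matrix (Fin d) (Fin d) ℝ} (hE : Eᵀ = -E) :
    (exp E)ᵀ * exp E = 1 := by
  rw [← Matrix.exp_transpose, hE,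
    ← Matrix.exp_add_of_commute _ _ ((Commute.refl E).neg_left), neg_add_cancel, exp_zero]

lemma exp_orth_right {E : Matrix (Fin d) (Fin d) ℝ} (hE : Eᵀ = -E) :
    exp E * (exp E)ᵀ = 1 := by
  rw [← Matrix.exp_transpose, hE,
    ← Matrix.exp_add_of_commute _ _ ((Commute.refl E).neg_right), add_neg_cancel, exp_zero]

lemma skew_smul {E : Matrix (Fin d) (Fin d) ℝ} (hE : Eᵀ = -E) (t : ℝ) :
    (t • E)ᵀ = -(t • E) := by
  rw [transpose_smul, hE, smul_neg]

lemma key (E₁ E₂ : Matrix (Fin d) (Fin d) ℝ)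
    (h₁ : E₁ᵀ = -E₁) (h₂ : E₂ᵀ = -E₂) :
    ‖exp E₂ - exp E₁‖ ≤ ‖E₂ - E₁‖ := by
  set f : ℝ → Matrix (Fin d) (Fin d) ℝ :=
    fun t => exp (t • E₂) * exp ((1 - t) • E₁) with hf
  set f' : ℝ → Matrix (Fin d) (Fin d) ℝ :=
    fun t => exp (t • E₂) * (E₂ - E₁) * exp ((1 - t) • E₁) with hf'
  have hderiv : ∀ t : ℝ, HasDerivAt f (f' t) t := by
    intro t
    have d1 : HasDerivAt (fun u : ℝ => exp (u • E₂)) (exp (t • E₂) * E₂) t :=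
      hasDerivAt_exp_smul_const E₂ t
    have inner : HasDerivAt (fun u : ℝ => 1 - u) (-1) t := by
      simpa using (hasDerivAt_id t).const_sub 1
    have d2' : HasDerivAt (fun s : ℝ => exp (s • E₁)) (E₁ * exp ((1 - t) • E₁)) (1 - t) :=
      hasDerivAt_exp_smul_const' E₁ (1 - t)
    have d2 : HasDerivAt (fun u : ℝ => exp ((1 - u) • E₁))
        ((-1 : ℝ) • (E₁ * exp ((1 - t) • E₁))) t := d2'.scomp t inner
    have := d1.mul d2
    convert this using 1
    · rfl
    · rfl
    · rfl
    · rfl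
    rw [hf']
    simp only [neg_one_smul, mul_neg]
    rw [mul_sub, sub_mul, mul_assoc, sub_eq_add_neg, mul_assoc]
  have hbound : ∀ t : ℝ, ‖f' t‖ = ‖E₂ - E₁‖ := by
    intro t
    rw [hf']
    simp only [mul_assoc]
    rw [frob_orth_left (exp_orth_left (skew_smul h₂ t)),
      frob_orth_right (exp_orth_right (skew_smul h₁ (1 - t)))]
  have mvt := Convex.norm_image_sub_le_of_norm_hasDerivWithin_le
    (f := f) (f' := f') (C := ‖E₂ - E₁‖) (s := Set.univ)
    (fun x _ => (hderiv x).hasDerivWithinAt)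
    (fun x _ => le_of_eq (hbound x)) convex_univ (Set.mem_univ 0) (Set.mem_univ 1)
  have hf1 : f 1 = exp E₂ := by
    simp [hf, exp_zero]
  have hf0 : f 0 = exp E₁ := by
    simp [hf, exp_zero]
  rw [hf1, hf0] at mvt
  simpa using mvt

end aux

/-- For skew-symmetric real `d × d` matrices `E₁`, `E₂`, the matrix exponential is
`1`-Lipschitz in the Frobenius norm. -/
theorem stmt_0 (d : ℕ) (E₁ E₂ : Matrix (Fin d) (Fin d) ℝ)
    (h₁ : E₁ᵀ = -E₁) (h₂ : E₂ᵀ = -E₂) :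
    frobNorm (NormedSpace.exp E₂ - NormedSpace.exp E₁) ≤ frobNorm (E₂ - E₁) := by
  rw [frobNorm_eq_norm, frobNorm_eq_norm]
  exact key E₁ E₂ h₁ h₂
end

section
/- The derivative of the matrix exponential is Lipschitz on skew-symmetric matrices with constant 1: for skew-symmetric E, E′ and any H with ‖H‖_F = 1, ‖∫₀¹ (exp(sE′) H exp((1−s)E′) − exp(sE) H exp((1−s)E)) ds‖_F ≤ ‖E′ − E‖_F. -/
open Matrix

/-- The derivative of the matrix exponential at `E` in direction `H`,
`Dexp E H = ∫₀¹ exp(sE) · H · exp((1-s)E) ds` (defined entrywise). -/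
noncomputable def Dexp {d : ℕ} (E H : Matrix (Fin d) (Fin d) ℝ) :
    Matrix (Fin d) (Fin d) ℝ :=
  Matrix.of fun i j =>
    ∫ s in (0:ℝ)..1,
      (NormedSpace.exp (s • E) * H * NormedSpace.exp ((1 - s) • E)) i j

open Matrix intervalIntegral
open scoped Matrix

attribute [local instance] Matrix.frobeniusNormedAddCommGroup Matrix.frobeniusNormedSpace
  Matrix.frobeniusNormedRing Matrix.frobeniusNormedAlgebra

variable {d : ℕ}

lemma frobNorm_eq (A : Matrix (Fin d) (Fin d) ℝ) :
    Real.sqrt (∑ i, ∑ j, (A i j) ^ 2) = ‖A‖ := by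
  rw [Matrix.frobenius_norm_def, ← Real.sqrt_eq_rpow]
  congr 1
  simp [Real.rpow_two, Real.norm_eq_abs, sq_abs]

lemma frobSq_eq_trace (A : Matrix (Fin d) (Fin d) ℝ) :
    (∑ i, ∑ j, (A i j) ^ 2) = Matrix.trace (Aᵀ * A) := by
  simp [Matrix.trace, Matrix.mul_apply, Matrix.diag, sq]
  exact Finset.sum_comm

lemma norm_orth_mul (Q A : Matrix (Fin d) (Fin d) ℝ) (hQ : Qᵀ * Q = 1) :
    ‖Q * A‖ = ‖A‖ := by
  rw [← frobNorm_eq, ← frobNorm_eq, frobSq_eq_trace, frobSq_eq_trace]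
  rw [Matrix.transpose_mul, Matrix.mul_assoc, ← Matrix.mul_assoc Qᵀ, hQ, Matrix.one_mul]

lemma norm_mul_orth (Q A : Matrix (Fin d) (Fin d) ℝ) (hQ : Qᵀ * Q = 1) :
    ‖A * Q‖ = ‖A‖ := by
  have hQ' : Q * Qᵀ = 1 := mul_eq_one_comm.mp hQ
  rw [← frobNorm_eq, ← frobNorm_eq, frobSq_eq_trace, frobSq_eq_trace]
  rw [Matrix.transpose_mul, Matrix.mul_assoc, Matrix.trace_mul_comm,
    Matrix.mul_assoc, Matrix.mul_assoc, hQ', Matrix.mul_one, Matrix.trace_mul_comm]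

open NormedSpace in
lemma exp_orth {E : Matrix (Fin d) (Fin d) ℝ} (hE : Eᵀ = -E) (t : ℝ) :
    (exp (t • E))ᵀ * exp (t • E) = 1 := by
  have h1 : (exp (t • E))ᵀ = exp (-(t • E)) := by
    rw [← Matrix.exp_transpose, Matrix.transpose_smul, hE, smul_neg]
  rw [h1, ← Matrix.exp_add_of_commute _ _ (Commute.neg_left (Commute.refl (t • E))), neg_add_cancel, exp_zero]

open NormedSpace in
lemma norm_exp_mul {E : Matrix (Fin d) (Fin d) ℝ} (hE : Eᵀ = -E) (t : ℝ)
    (A : Matrix (Fin d) (Fin d) ℝ) : ‖exp (t • E) * A‖ = ‖A‖ :=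
  norm_orth_mul _ A (exp_orth hE t)

open NormedSpace in
lemma norm_mul_exp {E : Matrix (Fin d) (Fin d) ℝ} (hE : Eᵀ = -E) (t : ℝ)
    (A : Matrix (Fin d) (Fin d) ℝ) : ‖A * exp (t • E)‖ = ‖A‖ :=
  norm_mul_orth _ A (exp_orth hE t)

open NormedSpace in
lemma contExp (E : Matrix (Fin d) (Fin d) ℝ) :
    Continuous (fun r : ℝ => exp (r • E)) :=
  exp_continuous.comp (continuous_id.smul continuous_const)

open NormedSpace in
lemma exp_diff_bound {E E' : Matrix (Fin d) (Fin d) ℝ} (hE : Eᵀ = -E) (hE' : E'ᵀ = -E')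
    {t : ℝ} (ht : 0 ≤ t) :
    ‖exp (t • E') - exp (t • E)‖ ≤ t * ‖E' - E‖ := by
  set g : ℝ → Matrix (Fin d) (Fin d) ℝ := fun r => exp (r • E') * exp ((t - r) • E) with hg
  set g' : ℝ → Matrix (Fin d) (Fin d) ℝ :=
    fun r => exp (r • E') * (E' - E) * exp ((t - r) • E) with hg'
  have key : ∀ r : ℝ, HasDerivAt g (g' r) r := by
    intro r
    have h1 : HasDerivAt (fun r : ℝ => exp (r • E')) (E' * exp (r • E')) r :=
      hasDerivAt_exp_smul_const' E' r
    have h2 : HasDerivAt (fun r : ℝ => exp ((t - r) • E))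
        ((-1 : ℝ) • (exp ((t - r) • E) * E)) r := by
      exact HasDerivAt.scomp r (hasDerivAt_exp_smul_const E (t - r)) ((hasDerivAt_id r).const_sub t)
    have h3 := h1.mul h2
    convert h3 using 1
    · rfl
    · rfl
    · rfl
    · rfl
    have c1 : E' * exp (r • E') = exp (r • E') * E' :=
      (((Commute.refl E').smul_right r).exp_right).eq
    have c2 : E * exp ((t - r) • E) = exp ((t - r) • E) * E :=
      (((Commute.refl E).smul_right (t - r)).exp_right).eq
    rw [hg']
    simp only [neg_one_smul, mul_neg, c1, ← c2]
    simp only [mul_sub, sub_mul, mul_assoc, sub_eq_add_neg, add_mul, neg_mul, mul_add, mul_neg]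
  have hcont : Continuous g' := by
    exact ((contExp E').mul continuous_const).mul
      ((contExp E).comp (continuous_const.sub continuous_id))
  have hftc : ∫ r in (0:ℝ)..t, g' r = g t - g 0 :=
    intervalIntegral.integral_eq_sub_of_hasDerivAt (fun r _ => key r)
      (hcont.intervalIntegrable _ _)
  have hgt : g t = exp (t • E') := by simp [hg, exp_zero]
  have hg0 : g 0 = exp (t • E) := by simp [hg, exp_zero]
  rw [← hgt, ← hg0, ← hftc]
  have hb : ∀ r ∈ Set.uIoc (0:ℝ) t, ‖g' r‖ ≤ ‖E' - E‖ := by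
    intro r _
    show ‖exp (r • E') * (E' - E) * exp ((t - r) • E)‖ ≤ ‖E' - E‖
    rw [mul_assoc, norm_exp_mul hE', norm_mul_exp hE]
  calc ‖∫ r in (0:ℝ)..t, g' r‖ ≤ ‖E' - E‖ * |t - 0| :=
        intervalIntegral.norm_integral_le_of_norm_le_const hb
    _ = t * ‖E' - E‖ := by rw [sub_zero, abs_of_nonneg ht, mul_comm]


open NormedSpace in
lemma contF (E H : Matrix (Fin d) (Fin d) ℝ) :
    Continuous (fun s : ℝ => exp (s • E) * H * exp ((1 - s) • E)) :=
  ((contExp E).mul continuous_const).mul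
    ((contExp E).comp (continuous_const.sub continuous_id))

open NormedSpace in
lemma Dexp_eq (E H : Matrix (Fin d) (Fin d) ℝ) :
    Dexp E H = ∫ s in (0:ℝ)..1, exp (s • E) * H * exp ((1 - s) • E) := by
  ext i j
  let L : Matrix (Fin d) (Fin d) ℝ →L[ℝ] ℝ :=
    LinearMap.toContinuousLinearMap
      ((LinearMap.proj j).comp (LinearMap.proj (R := ℝ) (φ := fun _ : Fin d => Fin d → ℝ) i))
  have hL : ∀ M : Matrix (Fin d) (Fin d) ℝ, L M = M i j := fun _ => rfl
  have key := ContinuousLinearMap.intervalIntegral_comp_comm L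
    ((contF E H).intervalIntegrable (μ := MeasureTheory.volume) 0 1)
  exact key

open NormedSpace in
/-- The derivative of the matrix exponential is `1`-Lipschitz on skew-symmetric
matrices. -/
theorem stmt_4 (d : ℕ) (E E' H : Matrix (Fin d) (Fin d) ℝ)
    (hE : Eᵀ = -E) (hE' : E'ᵀ = -E') (hH : frobNorm H = 1) :
    frobNorm (Dexp E' H - Dexp E H) ≤ frobNorm (E' - E) := by
  have hfrob : ∀ A : Matrix (Fin d) (Fin d) ℝ, frobNorm A = ‖A‖ := fun A => frobNorm_eq A
  rw [hfrob, hfrob]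
  rw [hfrob] at hH
  rw [Dexp_eq, Dexp_eq, ← intervalIntegral.integral_sub
    ((contF E' H).intervalIntegrable _ _) ((contF E H).intervalIntegrable _ _)]
  have hb : ∀ s ∈ Set.uIoc (0:ℝ) 1,
      ‖exp (s • E') * H * exp ((1 - s) • E') -
        exp (s • E) * H * exp ((1 - s) • E)‖ ≤ ‖E' - E‖ := by
    intro s hs
    rw [Set.uIoc_of_le zero_le_one] at hs
    obtain ⟨hs0, hs1⟩ := hs
    have hdecomp : exp (s • E') * H * exp ((1 - s) • E') -
        exp (s • E) * H * exp ((1 - s) • E) =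
        (exp (s • E') - exp (s • E)) * H * exp ((1 - s) • E') +
        exp (s • E) * H * (exp ((1 - s) • E') - exp ((1 - s) • E)) := by
      noncomm_ring
    rw [hdecomp]
    have h1 : ‖(exp (s • E') - exp (s • E)) * H * exp ((1 - s) • E')‖
        ≤ s * ‖E' - E‖ := by
      rw [norm_mul_exp hE']
      calc ‖(exp (s • E') - exp (s • E)) * H‖
          ≤ ‖exp (s • E') - exp (s • E)‖ * ‖H‖ := norm_mul_le _ _
        _ = ‖exp (s • E') - exp (s • E)‖ := by rw [hH, mul_one]
        _ ≤ s * ‖E' - E‖ := exp_diff_bound hE hE' hs0.le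
    have h2 : ‖exp (s • E) * H * (exp ((1 - s) • E') - exp ((1 - s) • E))‖
        ≤ (1 - s) * ‖E' - E‖ := by
      rw [mul_assoc, norm_exp_mul hE]
      calc ‖H * (exp ((1 - s) • E') - exp ((1 - s) • E))‖
          ≤ ‖H‖ * ‖exp ((1 - s) • E') - exp ((1 - s) • E)‖ := norm_mul_le _ _
        _ = ‖exp ((1 - s) • E') - exp ((1 - s) • E)‖ := by rw [hH, one_mul]
        _ ≤ (1 - s) * ‖E' - E‖ := exp_diff_bound hE hE' (by linarith)
    calc _ ≤ s * ‖E' - E‖ + (1 - s) * ‖E' - E‖ := norm_add_le_of_le h1 h2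
      _ = ‖E' - E‖ := by ring
  calc _ ≤ ‖E' - E‖ * |1 - (0:ℝ)| := intervalIntegral.norm_integral_le_of_norm_le_const hb
    _ = ‖E' - E‖ := by norm_num
end

section
/- Let G ∈ ℝ^{nd×d} satisfy GᵀG = n·I_d, let G* ∈ O(d)ⁿ be a block-orthogonal ground truth, let Δ be a symmetric nd×nd matrix, and C = G*G*ᵀ + Δ. If tr(Gᵀ C G) ≥ tr(G*ᵀ C G*), then d_F([G],[G*]) ≤ 4√d‖Δ‖/√n, where d_F([G],[G*]) = min_{Q∈O(d)} ‖G − G*Q‖_F and ‖Δ‖ is the spectral norm. -/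
open Matrix

/-- The nuclear norm of a real square matrix. -/
noncomputable def nuclearNorm {d : ℕ} (M : Matrix (Fin d) (Fin d) ℝ) : ℝ :=
  ∑ i, Real.sqrt ((Matrix.isHermitian_conjTranspose_mul_self M).eigenvalues i)

/-- The operator (spectral) norm of a real square matrix. -/
noncomputable def opNorm {m : Type*} [Fintype m] [DecidableEq m]
    (A : Matrix m m ℝ) : ℝ :=
  ‖Matrix.toEuclideanCLM (𝕜 := ℝ) A‖

/-- The `i`-th `d × d` block of a block-column matrix `X ∈ ℝ^{nd×d}`. -/
def blk {n d : ℕ} (X : Matrix (Fin n × Fin d) (Fin d) ℝ) (i : Fin n) :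
    Matrix (Fin d) (Fin d) ℝ :=
  Matrix.of fun a b => X (i, a) b

/-! ### Auxiliary lemmas -/

lemma conjT_eq_T {m k : Type*} (A : Matrix m k ℝ) : Aᴴ = Aᵀ :=
  Matrix.conjTranspose_eq_transpose_of_trivial A

lemma frobNorm_eq_sqrt_trace {m k : Type*} [Fintype m] [Fintype k]
    (A : Matrix m k ℝ) : frobNorm A = Real.sqrt (Matrix.trace (Aᵀ * A)) := by
  unfold frobNorm
  congr 1
  rw [Matrix.trace, Finset.sum_comm]
  congr 1; ext j
  simp [Matrix.diag, Matrix.mul_apply, pow_two]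

lemma frobNorm_nonneg' {m k : Type*} [Fintype m] [Fintype k]
    (A : Matrix m k ℝ) : 0 ≤ frobNorm A := Real.sqrt_nonneg _

lemma frobNorm_sq {m k : Type*} [Fintype m] [Fintype k]
    (A : Matrix m k ℝ) : frobNorm A ^ 2 = Matrix.trace (Aᵀ * A) := by
  rw [frobNorm_eq_sqrt_trace, Real.sq_sqrt]
  rw [Matrix.trace]
  apply Finset.sum_nonneg
  intro j _
  simp only [Matrix.diag, Matrix.mul_apply, Matrix.transpose_apply]
  exact Finset.sum_nonneg fun i _ => mul_self_nonneg _

lemma euc_norm (m : Type*) [Fintype m] (x : m → ℝ) :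
    ‖(WithLp.equiv 2 (m → ℝ)).symm x‖ = Real.sqrt (∑ i, x i ^ 2) := by
  rw [EuclideanSpace.norm_eq]
  simp [Real.norm_eq_abs, sq_abs]

lemma dot_mulVec_le {m : Type*} [Fintype m] [DecidableEq m]
    (Δ : Matrix m m ℝ) (x y : m → ℝ) :
    y ⬝ᵥ (Δ *ᵥ x) ≤ opNorm Δ * (Real.sqrt (∑ i, x i ^ 2) * Real.sqrt (∑ i, y i ^ 2)) := by
  set x' : EuclideanSpace ℝ m := (WithLp.equiv 2 (m → ℝ)).symm x
  set y' : EuclideanSpace ℝ m := (WithLp.equiv 2 (m → ℝ)).symm y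
  have h1 : y ⬝ᵥ (Δ *ᵥ x) = inner ℝ y' (Matrix.toEuclideanCLM (𝕜 := ℝ) Δ x') := by
    simp only [x', y', WithLp.equiv_symm_apply, Matrix.toEuclideanCLM_toLp]
    simp only [PiLp.inner_apply, RCLike.inner_apply, conj_trivial]
    simp [dotProduct, Matrix.toLin'_apply, x', y', mul_comm]
  rw [h1]
  calc inner ℝ y' (Matrix.toEuclideanCLM (𝕜 := ℝ) Δ x')
      ≤ ‖y'‖ * ‖Matrix.toEuclideanCLM (𝕜 := ℝ) Δ x'‖ := real_inner_le_norm _ _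
    _ ≤ ‖y'‖ * (opNorm Δ * ‖x'‖) := by
        apply mul_le_mul_of_nonneg_left (ContinuousLinearMap.le_opNorm _ _) (norm_nonneg _)
    _ = opNorm Δ * (Real.sqrt (∑ i, x i ^ 2) * Real.sqrt (∑ i, y i ^ 2)) := by
        rw [euc_norm, euc_norm]; ring

lemma sqrt_cs {k : Type*} [Fintype k] (α β : k → ℝ) (hα : ∀ j, 0 ≤ α j) (hβ : ∀ j, 0 ≤ β j) :
    ∑ j, Real.sqrt (α j) * Real.sqrt (β j) ≤ Real.sqrt (∑ j, α j) * Real.sqrt (∑ j, β j) :=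
  Real.sum_sqrt_mul_sqrt_le Finset.univ hα hβ

lemma trace_bound {m k : Type*} [Fintype m] [Fintype k] [DecidableEq m]
    (Δ : Matrix m m ℝ) (A B : Matrix m k ℝ) :
    Matrix.trace (Bᵀ * Δ * A) ≤ opNorm Δ * frobNorm A * frobNorm B := by
  have h1 : Matrix.trace (Bᵀ * Δ * A)
      = ∑ j, (fun i => B i j) ⬝ᵥ (Δ *ᵥ (fun i => A i j)) := by
    rw [Matrix.trace]
    congr 1; ext j
    simp only [Matrix.diag, Matrix.mul_apply, Matrix.transpose_apply, dotProduct,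
      Matrix.mulVec, dotProduct]
    simp only [Finset.sum_mul, Finset.mul_sum]
    rw [Finset.sum_comm]
    exact Finset.sum_congr rfl fun a _ => Finset.sum_congr rfl fun b _ => by ring
  rw [h1]
  have h2 : ∑ j, (fun i => B i j) ⬝ᵥ (Δ *ᵥ (fun i => A i j))
      ≤ ∑ j, opNorm Δ * (Real.sqrt (∑ i, A i j ^ 2) * Real.sqrt (∑ i, B i j ^ 2)) :=
    Finset.sum_le_sum fun j _ => dot_mulVec_le Δ _ _
  refine h2.trans ?_
  rw [← Finset.mul_sum]
  have h3 : ∑ j, Real.sqrt (∑ i, A i j ^ 2) * Real.sqrt (∑ i, B i j ^ 2)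
      ≤ frobNorm A * frobNorm B := by
    have := sqrt_cs (fun j => ∑ i, A i j ^ 2) (fun j => ∑ i, B i j ^ 2)
      (fun j => Finset.sum_nonneg fun i _ => sq_nonneg _)
      (fun j => Finset.sum_nonneg fun i _ => sq_nonneg _)
    refine this.trans ?_
    unfold frobNorm
    rw [show (∑ i, ∑ j, A i j ^ 2) = ∑ j, ∑ i, A i j ^ 2 from Finset.sum_comm,
      show (∑ i, ∑ j, B i j ^ 2) = ∑ j, ∑ i, B i j ^ 2 from Finset.sum_comm]
  calc opNorm Δ * ∑ j, Real.sqrt (∑ i, A i j ^ 2) * Real.sqrt (∑ i, B i j ^ 2)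
      ≤ opNorm Δ * (frobNorm A * frobNorm B) :=
        mul_le_mul_of_nonneg_left h3 (norm_nonneg _)
    _ = opNorm Δ * frobNorm A * frobNorm B := by ring

lemma sq_dot {m k : Type*} [Fintype m] [Fintype k] (A : Matrix m k ℝ) (x : k → ℝ) :
    (A *ᵥ x) ⬝ᵥ (A *ᵥ x) = x ⬝ᵥ ((Aᵀ * A) *ᵥ x) := by
  rw [← Matrix.mulVec_mulVec, Matrix.dotProduct_mulVec x, Matrix.vecMul_transpose]

lemma trace_le_mul_nuclearNorm {d : ℕ} (M : Matrix (Fin d) (Fin d) ℝ) (c : ℝ) (hc : 0 ≤ c)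
    (hM : ∀ v : Fin d → ℝ, (M *ᵥ v) ⬝ᵥ (M *ᵥ v) ≤ c ^ 2 * (v ⬝ᵥ v)) :
    Matrix.trace (Mᵀ * M) ≤ c * nuclearNorm M := by
  set hH := Matrix.isHermitian_conjTranspose_mul_self M with hHdef
  set lam := hH.eigenvalues with hlam
  have hl0 : ∀ i, 0 ≤ lam i := Matrix.eigenvalues_conjTranspose_mul_self_nonneg M
  have h1 : Matrix.trace (Mᵀ * M) = ∑ i, lam i := by
    have h0 := Matrix.IsHermitian.conjStarAlgAut_star_eigenvectorUnitary hH
    rw [Unitary.conjStarAlgAut_star_apply] at h0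
    have h := congrArg Matrix.trace h0
    rw [Matrix.trace_mul_cycle] at h
    rw [← Matrix.mul_assoc] at h
    rw [(Matrix.mem_unitaryGroup_iff).mp (hH.eigenvectorUnitary).2] at h
    rw [Matrix.one_mul] at h
    rw [← conjT_eq_T M, h, Matrix.trace_diagonal]
    simp
    rfl
  have h2 : ∀ i, lam i ≤ c ^ 2 := by
    intro i
    have hv := hH.mulVec_eigenvectorBasis i
    set v : Fin d → ℝ := ⇑(hH.eigenvectorBasis i) with hvdef
    have hnorm : v ⬝ᵥ v = 1 := by
      have h3 : (inner ℝ (hH.eigenvectorBasis i) (hH.eigenvectorBasis i) : ℝ) = 1 := by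
        rw [real_inner_self_eq_norm_sq, hH.eigenvectorBasis.orthonormal.1 i]; norm_num
      rw [← h3, PiLp.inner_apply]
      simp only [RCLike.inner_apply, conj_trivial]
      rfl
    have h4 : lam i = (M *ᵥ v) ⬝ᵥ (M *ᵥ v) := by
      have h5 : v ⬝ᵥ ((Mᴴ * M) *ᵥ v) = lam i := by
        rw [hv, dotProduct_smul, hnorm]
        exact (smul_eq_mul _ _).trans (mul_one _)
      rw [← h5, ← Matrix.mulVec_mulVec, conjT_eq_T, Matrix.dotProduct_mulVec,
        Matrix.vecMul_transpose]
    have := hM v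
    rw [hnorm, mul_one] at this
    rw [h4]; exact this
  rw [h1]
  show ∑ i, lam i ≤ c * ∑ i, Real.sqrt (lam i)
  rw [Finset.mul_sum]
  apply Finset.sum_le_sum
  intro i _
  calc lam i = Real.sqrt (lam i) * Real.sqrt (lam i) := (Real.mul_self_sqrt (hl0 i)).symm
    _ ≤ c * Real.sqrt (lam i) := by
        apply mul_le_mul_of_nonneg_right _ (Real.sqrt_nonneg _)
        calc Real.sqrt (lam i) ≤ Real.sqrt (c ^ 2) := Real.sqrt_le_sqrt (h2 i)
          _ = c := Real.sqrt_sq hc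
lemma exists_polar {d : ℕ} (M : Matrix (Fin d) (Fin d) ℝ) :
    ∃ Q : Matrix (Fin d) (Fin d) ℝ, Qᵀ * Q = 1 ∧ Matrix.trace (Qᵀ * M) = nuclearNorm M := by
  set hH := Matrix.isHermitian_conjTranspose_mul_self M with hHdef
  set lam := hH.eigenvalues with hlam
  have hl0 : ∀ i, 0 ≤ lam i := Matrix.eigenvalues_conjTranspose_mul_self_nonneg M
  set V : Matrix (Fin d) (Fin d) ℝ := (hH.eigenvectorUnitary : Matrix (Fin d) (Fin d) ℝ) with hVdef
  have hstarV : Vᵀ = star V := by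
    rw [Matrix.star_eq_conjTranspose, conjT_eq_T]
  have hV2 : V * Vᵀ = 1 := by
    rw [hstarV]
    exact Matrix.mem_unitaryGroup_iff.mp hH.eigenvectorUnitary.2
  have hD : Vᵀ * (Mᵀ * M) * V = Matrix.diagonal lam := by
    have h := by
      have h0 := Matrix.IsHermitian.conjStarAlgAut_star_eigenvectorUnitary hH
      rw [Unitary.conjStarAlgAut_star_apply] at h0
      exact h0
    rw [← conjT_eq_T M, hstarV, h]
    congr 1
  set sig : Fin d → ℝ := fun i => Real.sqrt (lam i) with hsig
  set cc : Fin d → ℝ := fun i => if lam i = 0 then 0 else (Real.sqrt (lam i))⁻¹ with hcc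
  set e : Fin d → ℝ := fun i => if lam i = 0 then 0 else 1 with he
  set W : Matrix (Fin d) (Fin d) ℝ := M * V * Matrix.diagonal cc with hW
  have hsqrt_ne : ∀ i, lam i ≠ 0 → Real.sqrt (lam i) ≠ 0 := fun i hi =>
    Real.sqrt_ne_zero'.mpr (lt_of_le_of_ne (hl0 i) (Ne.symm hi))
  have hWW : Wᵀ * W = Matrix.diagonal e := by
    have ht : Wᵀ = Matrix.diagonal cc * (Vᵀ * Mᵀ) := by
      rw [hW, Matrix.transpose_mul, Matrix.transpose_mul, Matrix.diagonal_transpose]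
    rw [ht, hW]
    have : Matrix.diagonal cc * (Vᵀ * Mᵀ) * (M * V * Matrix.diagonal cc)
        = Matrix.diagonal cc * (Vᵀ * (Mᵀ * M) * V) * Matrix.diagonal cc := by
      simp only [Matrix.mul_assoc]
    rw [this, hD, Matrix.diagonal_mul_diagonal, Matrix.diagonal_mul_diagonal]
    have hfun : (fun i => cc i * lam i * cc i) = e := by
      funext i
      by_cases hi : lam i = 0
      · simp [hcc, he, hi]
      · simp only [hcc, he, if_neg hi]
        rw [← Real.mul_self_sqrt (hl0 i)]
        have hs := hsqrt_ne i hi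
        field_simp
        rw [Real.sqrt_sq (Real.sqrt_nonneg _)]
    rw [hfun]
  have hX : M * V * Matrix.diagonal (fun i => 1 - e i) = 0 := by
    apply Matrix.conjTranspose_mul_self_eq_zero.mp
    rw [conjT_eq_T]
    have ht : (M * V * Matrix.diagonal (fun i => 1 - e i))ᵀ
        = Matrix.diagonal (fun i => 1 - e i) * (Vᵀ * Mᵀ) := by
      rw [Matrix.transpose_mul, Matrix.transpose_mul, Matrix.diagonal_transpose]
    rw [ht]
    have : Matrix.diagonal (fun i => 1 - e i) * (Vᵀ * Mᵀ)
          * (M * V * Matrix.diagonal (fun i => 1 - e i))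
        = Matrix.diagonal (fun i => 1 - e i) * (Vᵀ * (Mᵀ * M) * V)
          * Matrix.diagonal (fun i => 1 - e i) := by
      simp only [Matrix.mul_assoc]
    rw [this, hD, Matrix.diagonal_mul_diagonal, Matrix.diagonal_mul_diagonal]
    have : (fun i => (1 - e i) * lam i * (1 - e i)) = fun _ => (0 : ℝ) := by
      funext i
      by_cases hi : lam i = 0 <;> simp [he, hi]
    rw [this, Matrix.diagonal_zero]
  have hMV : M * V = W * Matrix.diagonal sig := by
    have hcs : (fun i => cc i * sig i) = e := by
      funext i
      by_cases hi : lam i = 0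
      · simp [hcc, he, hsig, hi]
      · simp only [hcc, he, hsig, if_neg hi]
        rw [inv_mul_cancel₀ (hsqrt_ne i hi)]
    have h1 : W * Matrix.diagonal sig = M * V * Matrix.diagonal e := by
      rw [hW]
      calc M * V * Matrix.diagonal cc * Matrix.diagonal sig
          = M * V * (Matrix.diagonal cc * Matrix.diagonal sig) := by
            simp only [Matrix.mul_assoc]
        _ = M * V * Matrix.diagonal e := by
            rw [Matrix.diagonal_mul_diagonal, hcs]
    have hsum : Matrix.diagonal e + Matrix.diagonal (fun i => 1 - e i)
        = (1 : Matrix (Fin d) (Fin d) ℝ) := by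
      rw [Matrix.diagonal_add]
      have : (fun i => e i + (1 - e i)) = fun _ => (1 : ℝ) := by funext i; ring
      rw [this, Matrix.diagonal_one]
    have h2 : M * V * Matrix.diagonal e + M * V * Matrix.diagonal (fun i => 1 - e i)
        = M * V := by
      rw [← Matrix.mul_add, hsum, Matrix.mul_one]
    rw [h1]
    conv_lhs => rw [← h2]
    rw [hX, add_zero]
  -- the subspace of vectors supported on nonzero eigenvalues
  set S : Submodule ℝ (EuclideanSpace ℝ (Fin d)) :=
    { carrier := {x | ∀ i, lam i = 0 → x i = 0}
      add_mem' := fun hx hy i hi => by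
        show _ + _ = (0 : ℝ)
        exact (congrArg₂ (· + ·) (hx i hi) (hy i hi)).trans (add_zero 0)
      zero_mem' := fun i _ => rfl
      smul_mem' := fun c x hx i hi => by
        show c * x i = 0
        rw [hx i hi, mul_zero] } with hS
  have hWiso : ∀ x : EuclideanSpace ℝ (Fin d), (∀ i, lam i = 0 → x i = 0) →
      ‖Matrix.toEuclideanLin W x‖ = ‖x‖ := by
    intro x hx
    rw [EuclideanSpace.norm_eq, EuclideanSpace.norm_eq]
    congr 1
    have hcoord : ∀ i, ‖(Matrix.toEuclideanLin W x) i‖ ^ 2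
        = (W *ᵥ (fun j => x j)) i ^ 2 := by
      intro i
      rw [Real.norm_eq_abs, sq_abs]
      rfl
    calc ∑ i, ‖(Matrix.toEuclideanLin W x) i‖ ^ 2
        = ∑ i, (W *ᵥ (fun j => x j)) i ^ 2 := by
          exact Finset.sum_congr rfl fun i _ => hcoord i
      _ = (W *ᵥ (fun j => x j)) ⬝ᵥ (W *ᵥ (fun j => x j)) := by
          simp [dotProduct, pow_two]
      _ = (fun j => x j) ⬝ᵥ ((Wᵀ * W) *ᵥ (fun j => x j)) := sq_dot W _
      _ = ∑ i, x i * (e i * x i) := by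
          rw [hWW]
          simp [dotProduct, Matrix.mulVec_diagonal]
      _ = ∑ i, ‖x i‖ ^ 2 := by
          apply Finset.sum_congr rfl
          intro i _
          rw [Real.norm_eq_abs, sq_abs]
          by_cases hi : lam i = 0
          · rw [hx i hi]; ring
          · simp [he, hi]; ring
  set L : S →ₗᵢ[ℝ] EuclideanSpace ℝ (Fin d) :=
    { toLinearMap := (Matrix.toEuclideanLin W).comp S.subtype
      norm_map' := fun x => hWiso x x.2 } with hL
  set U' := L.extend with hU'
  set U : Matrix (Fin d) (Fin d) ℝ :=
    Matrix.of fun i j => (U' (EuclideanSpace.single j 1)) i with hUdef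
  have hUext : ∀ j, lam j ≠ 0 →
      U' (EuclideanSpace.single j 1) = Matrix.toEuclideanLin W (EuclideanSpace.single j 1) := by
    intro j hj
    have mem : (EuclideanSpace.single j (1:ℝ)) ∈ S := by
      intro i hi
      have : i ≠ j := fun h => hj (h ▸ hi)
      rw [EuclideanSpace.single_apply, if_neg this]
    have := L.extend_apply ⟨_, mem⟩
    exact this
  have hUU : Uᵀ * U = 1 := by
    ext i j
    have : (Uᵀ * U) i j = ∑ k, U k i * U k j := by
      simp [Matrix.mul_apply, Matrix.transpose_apply]
    rw [this]
    have hinner : ∑ k, U k i * U k j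
        = (inner ℝ (U' (EuclideanSpace.single i 1)) (U' (EuclideanSpace.single j 1)) : ℝ) := by
      rw [PiLp.inner_apply]
      simp [hUdef, RCLike.inner_apply]
      exact Finset.sum_congr rfl fun _ _ => mul_comm _ _
    rw [hinner, LinearIsometry.inner_map_map]
    rw [EuclideanSpace.inner_single_left]
    simp [EuclideanSpace.single_apply, Matrix.one_apply, eq_comm]
  refine ⟨U * Vᵀ, ?_, ?_⟩
  · rw [Matrix.transpose_mul, Matrix.transpose_transpose]
    calc V * Uᵀ * (U * Vᵀ) = V * (Uᵀ * U) * Vᵀ := by simp only [Matrix.mul_assoc]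
      _ = 1 := by rw [hUU, Matrix.mul_one, hV2]
  · rw [Matrix.transpose_mul, Matrix.transpose_transpose]
    have h1 : Matrix.trace (V * Uᵀ * M) = Matrix.trace (Uᵀ * (M * V)) := by
      rw [Matrix.mul_assoc, Matrix.trace_mul_comm, Matrix.mul_assoc]
    rw [h1, hMV, ← Matrix.mul_assoc]
    have h2 : Matrix.trace (Uᵀ * W * Matrix.diagonal sig)
        = ∑ i, (Uᵀ * W) i i * sig i := by
      rw [Matrix.trace]
      apply Finset.sum_congr rfl
      intro i _
      rw [Matrix.diag, Matrix.mul_diagonal]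
    rw [h2]
    have h3 : ∀ i, (Uᵀ * W) i i * sig i = sig i := by
      intro i
      by_cases hi : lam i = 0
      · have : sig i = 0 := by rw [hsig]; simp [hi]
        rw [this, mul_zero]
      · have hcol : ∀ k, W k i = (Matrix.toEuclideanLin W (EuclideanSpace.single i 1)) k := by
          intro k
          show W k i = (W *ᵥ (fun j => (EuclideanSpace.single i (1:ℝ)) j)) k
          simp [Matrix.mulVec, dotProduct, EuclideanSpace.single_apply]
        have : (Uᵀ * W) i i
            = (inner ℝ (U' (EuclideanSpace.single i 1)) (U' (EuclideanSpace.single i 1)) : ℝ) := by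
          rw [Matrix.mul_apply, PiLp.inner_apply]
          simp only [RCLike.inner_apply, conj_trivial]
          apply Finset.sum_congr rfl
          intro k _
          rw [Matrix.transpose_apply, hcol k, ← hUext i hi]
          rfl
        rw [this, LinearIsometry.inner_map_map, EuclideanSpace.inner_single_left]
        simp [EuclideanSpace.single_apply]
    rw [Finset.sum_congr rfl fun i _ => h3 i]
    rfl

/-- ℓ₂-estimation error: if `GᵀG = n I`, `C = G*G*ᵀ + Δ` with `Δ` symmetric and
`tr(GᵀCG) ≥ tr(G*ᵀCG*)`, then `d_F([G],[G*]) ≤ 4√d‖Δ‖/√n`. -/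
theorem stmt_7 (n d : ℕ) (G Gs : Matrix (Fin n × Fin d) (Fin d) ℝ)
    (Δ C : Matrix (Fin n × Fin d) (Fin n × Fin d) ℝ)
    (hG : Gᵀ * G = (n : ℝ) • (1 : Matrix (Fin d) (Fin d) ℝ))
    (hGs : ∀ i, (blk Gs i)ᵀ * blk Gs i = 1)
    (hΔ : Δᵀ = Δ) (hC : C = Gs * Gsᵀ + Δ)
    (hopt : Matrix.trace (Gᵀ * C * G) ≥ Matrix.trace (Gsᵀ * C * Gs)) :
    sInf {r : ℝ | ∃ Q : Matrix (Fin d) (Fin d) ℝ, Qᵀ * Q = 1 ∧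
        r = frobNorm (G - Gs * Q)} ≤
      4 * Real.sqrt d * opNorm Δ / Real.sqrt n := by
  have hBdd : BddBelow {r : ℝ | ∃ Q : Matrix (Fin d) (Fin d) ℝ, Qᵀ * Q = 1 ∧
      r = frobNorm (G - Gs * Q)} := by
    refine ⟨0, fun r hr => ?_⟩
    obtain ⟨Q, _, rfl⟩ := hr
    exact frobNorm_nonneg' _
  have hRHS0 : 0 ≤ 4 * Real.sqrt d * opNorm Δ / Real.sqrt n :=
    div_nonneg (mul_nonneg (by positivity) (norm_nonneg _)) (Real.sqrt_nonneg _)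
  by_cases hn : n = 0
  · subst hn
    have hmem : frobNorm (G - Gs * (1 : Matrix (Fin d) (Fin d) ℝ)) ∈ {r : ℝ | ∃ Q : Matrix (Fin d) (Fin d) ℝ, Qᵀ * Q = 1 ∧
        r = frobNorm (G - Gs * Q)} := ⟨1, by simp, rfl⟩
    have h0 : frobNorm (G - Gs * (1 : Matrix (Fin d) (Fin d) ℝ)) = 0 := by
      unfold frobNorm
      rw [Finset.univ_eq_empty, Finset.sum_empty, Real.sqrt_zero]
    have := csInf_le hBdd hmem
    rw [h0] at this
    exact this.trans hRHS0
  have hnpos : 0 < (n : ℝ) := by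
    exact_mod_cast Nat.pos_of_ne_zero hn
  -- GsᵀGs = n • 1
  have hGsGs : Gsᵀ * Gs = (n : ℝ) • (1 : Matrix (Fin d) (Fin d) ℝ) := by
    ext a b
    rw [Matrix.mul_apply]
    have : ∑ p : Fin n × Fin d, Gsᵀ a p * Gs p b
        = ∑ i : Fin n, ∑ x : Fin d, Gs (i, x) a * Gs (i, x) b := by
      rw [Fintype.sum_prod_type]
      exact Finset.sum_congr rfl fun i _ => Finset.sum_congr rfl fun x _ => by
        rw [Matrix.transpose_apply]
    rw [this]
    have hblk : ∀ i : Fin n, ∑ x : Fin d, Gs (i, x) a * Gs (i, x) b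
        = (1 : Matrix (Fin d) (Fin d) ℝ) a b := by
      intro i
      have := congrFun (congrFun (hGs i) a) b
      rw [Matrix.mul_apply] at this
      rw [← this]
      exact Finset.sum_congr rfl fun x _ => rfl
    rw [Finset.sum_congr rfl fun i _ => hblk i, Finset.sum_const, Finset.card_univ,
      Fintype.card_fin]
    simp [Matrix.smul_apply, nsmul_eq_mul]
  obtain ⟨Q, hQ, htr⟩ := exists_polar (Gsᵀ * G)
  set M : Matrix (Fin d) (Fin d) ℝ := Gsᵀ * G with hM
  set H : Matrix (Fin n × Fin d) (Fin d) ℝ := Gs * Q with hHQ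
  set R : Matrix (Fin n × Fin d) (Fin d) ℝ := G - H with hR
  set r : ℝ := frobNorm R with hrdef
  have hr0 : 0 ≤ r := frobNorm_nonneg' _
  have hQQ : Q * Qᵀ = 1 := mul_eq_one_comm.mp hQ
  have htrG : Matrix.trace (Gᵀ * G) = (n : ℝ) * d := by
    rw [hG, Matrix.trace_smul, Matrix.trace_one]
    simp [Fintype.card_fin]
  have hHH : Hᵀ * H = (n : ℝ) • (1 : Matrix (Fin d) (Fin d) ℝ) := by
    rw [hHQ, Matrix.transpose_mul]
    calc Qᵀ * Gsᵀ * (Gs * Q) = Qᵀ * (Gsᵀ * Gs) * Q := by simp only [Matrix.mul_assoc]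
      _ = Qᵀ * ((n : ℝ) • 1) * Q := by rw [hGsGs]
      _ = (n : ℝ) • (Qᵀ * Q) := by
          rw [Matrix.mul_smul, Matrix.mul_one, Matrix.smul_mul]
      _ = (n : ℝ) • 1 := by rw [hQ]
  have htrH : Matrix.trace (Hᵀ * H) = (n : ℝ) * d := by
    rw [hHH, Matrix.trace_smul, Matrix.trace_one]
    simp [Fintype.card_fin]
  have hfG : frobNorm G = Real.sqrt ((n:ℝ) * d) := by
    rw [frobNorm_eq_sqrt_trace, htrG]
  have hfH : frobNorm H = Real.sqrt ((n:ℝ) * d) := by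
    rw [frobNorm_eq_sqrt_trace, htrH]
  -- r² = 2nd − 2·nuclearNorm M
  have hr2 : r ^ 2 = 2 * ((n:ℝ) * d) - 2 * nuclearNorm M := by
    rw [hrdef, frobNorm_sq, hR]
    have hexp : (G - H)ᵀ * (G - H) = Gᵀ * G - Gᵀ * H - Hᵀ * G + Hᵀ * H := by
      rw [Matrix.transpose_sub, Matrix.sub_mul, Matrix.mul_sub, Matrix.mul_sub]
      abel
    rw [hexp, Matrix.trace_add, Matrix.trace_sub, Matrix.trace_sub]
    have e2 : Matrix.trace (Hᵀ * G) = nuclearNorm M := by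
      have h : Hᵀ * G = Qᵀ * M := by
        rw [hHQ, hM, Matrix.transpose_mul]
        simp only [Matrix.mul_assoc]
      rw [h, htr]
    have e1 : Matrix.trace (Gᵀ * H) = nuclearNorm M := by
      have h : Gᵀ * H = (Hᵀ * G)ᵀ := by
        rw [Matrix.transpose_mul, Matrix.transpose_transpose]
      rw [h, Matrix.trace_transpose, e2]
    rw [e1, e2, htrG, htrH]; ring
  -- optimality gives a lower bound on trace (Mᵀ M)
  have hMtM : Gᵀ * (Gs * Gsᵀ) * G = Mᵀ * M := by
    rw [hM, Matrix.transpose_mul, Matrix.transpose_transpose]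
    simp only [Matrix.mul_assoc]
  have hGs4 : Matrix.trace (Gsᵀ * (Gs * Gsᵀ) * Gs) = (n:ℝ)^2 * d := by
    have h : Gsᵀ * (Gs * Gsᵀ) * Gs = ((n:ℝ) • (1 : Matrix (Fin d) (Fin d) ℝ))
        * ((n:ℝ) • (1 : Matrix (Fin d) (Fin d) ℝ)) := by
      calc Gsᵀ * (Gs * Gsᵀ) * Gs = (Gsᵀ * Gs) * (Gsᵀ * Gs) := by
            simp only [Matrix.mul_assoc]
        _ = _ := by rw [hGsGs]
    rw [h, Matrix.smul_mul, Matrix.mul_smul, Matrix.one_mul, smul_smul,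
      Matrix.trace_smul, Matrix.trace_one, Fintype.card_fin, smul_eq_mul]
    push_cast; ring
  have hopt' : (n:ℝ)^2 * d + Matrix.trace (Gsᵀ * Δ * Gs)
      ≤ Matrix.trace (Mᵀ * M) + Matrix.trace (Gᵀ * Δ * G) := by
    have hL : Matrix.trace (Gᵀ * C * G) = Matrix.trace (Mᵀ * M) + Matrix.trace (Gᵀ * Δ * G) := by
      rw [hC]
      have : Gᵀ * (Gs * Gsᵀ + Δ) * G = Gᵀ * (Gs * Gsᵀ) * G + Gᵀ * Δ * G := by
        rw [Matrix.mul_add, Matrix.add_mul]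
      rw [this, Matrix.trace_add, hMtM]
    have hRt : Matrix.trace (Gsᵀ * C * Gs)
        = (n:ℝ)^2 * d + Matrix.trace (Gsᵀ * Δ * Gs) := by
      rw [hC]
      have : Gsᵀ * (Gs * Gsᵀ + Δ) * Gs = Gsᵀ * (Gs * Gsᵀ) * Gs + Gsᵀ * Δ * Gs := by
        rw [Matrix.mul_add, Matrix.add_mul]
      rw [this, Matrix.trace_add, hGs4]
    rw [← hL, ← hRt]
    exact hopt
  -- trace (Gsᵀ Δ Gs) = trace (Hᵀ Δ H)
  have hGsH : Matrix.trace (Gsᵀ * Δ * Gs) = Matrix.trace (Hᵀ * Δ * H) := by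
    have h : Hᵀ * Δ * H = Qᵀ * (Gsᵀ * Δ * Gs) * Q := by
      rw [hHQ, Matrix.transpose_mul]
      simp only [Matrix.mul_assoc]
    have h2 : (Qᵀ * (Gsᵀ * Δ * Gs) * Q).trace = (Gsᵀ * Δ * Gs).trace := by
      rw [Matrix.trace_mul_cycle, hQQ, Matrix.one_mul]
    rw [h, h2]
  -- split
  have hsplit : Matrix.trace (Gᵀ * Δ * G)
      = Matrix.trace (Hᵀ * Δ * H) + Matrix.trace (Gᵀ * Δ * R) + Matrix.trace (Rᵀ * Δ * H) := by
    rw [← Matrix.trace_add, ← Matrix.trace_add]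
    congr 1
    rw [hR, Matrix.transpose_sub, Matrix.mul_sub, Matrix.sub_mul, Matrix.sub_mul]
    abel
  have b1 : Matrix.trace (Gᵀ * Δ * R) ≤ opNorm Δ * r * Real.sqrt ((n:ℝ)*d) := by
    have := trace_bound Δ R G
    rwa [hfG, ← hrdef] at this
  have b2 : Matrix.trace (Rᵀ * Δ * H) ≤ opNorm Δ * Real.sqrt ((n:ℝ)*d) * r := by
    have := trace_bound Δ H R
    rwa [hfH, ← hrdef] at this
  have key : (n:ℝ)^2 * d - 2 * opNorm Δ * Real.sqrt ((n:ℝ)*d) * r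
      ≤ Matrix.trace (Mᵀ * M) := by
    have h := hopt'
    rw [hGsH, hsplit] at h
    linarith [b1, b2]
  -- operator bound to get the nuclear norm inequality
  have dot_self_nonneg : ∀ {m : Type} [Fintype m] (x : m → ℝ), 0 ≤ x ⬝ᵥ x := by
    intro m _ x
    exact Finset.sum_nonneg fun i _ => mul_self_nonneg _
  have dot_self_eq : ∀ {m : Type} [Fintype m] (x : m → ℝ), x ⬝ᵥ x = ∑ i, x i ^ 2 := by
    intro m _ x
    simp [dotProduct, pow_two]
  have hGv : ∀ v : Fin d → ℝ, (G *ᵥ v) ⬝ᵥ (G *ᵥ v) = (n:ℝ) * (v ⬝ᵥ v) := by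
    intro v
    rw [sq_dot, hG, Matrix.smul_mulVec, Matrix.one_mulVec, dotProduct_smul,
      smul_eq_mul]
  have hGsW : ∀ w : Fin n × Fin d → ℝ, (Gsᵀ *ᵥ w) ⬝ᵥ (Gsᵀ *ᵥ w) ≤ (n:ℝ) * (w ⬝ᵥ w) := by
    intro w
    set u : Fin d → ℝ := Gsᵀ *ᵥ w with hu
    set s : ℝ := u ⬝ᵥ u with hs
    have hs0 : 0 ≤ s := dot_self_nonneg u
    have h1 : s = w ⬝ᵥ (Gs *ᵥ u) := by
      rw [hs, hu, sq_dot Gsᵀ w, Matrix.transpose_transpose, ← Matrix.mulVec_mulVec]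
    have h2 : (Gs *ᵥ u) ⬝ᵥ (Gs *ᵥ u) = (n:ℝ) * s := by
      rw [sq_dot, hGsGs, Matrix.smul_mulVec, Matrix.one_mulVec, dotProduct_smul,
        smul_eq_mul, hs]
    have hCS : w ⬝ᵥ (Gs *ᵥ u) ≤ Real.sqrt (w ⬝ᵥ w) * Real.sqrt ((n:ℝ) * s) := by
      have hh := Real.sum_mul_le_sqrt_mul_sqrt Finset.univ w (Gs *ᵥ u)
      rw [← dot_self_eq, ← dot_self_eq, h2] at hh
      exact hh
    by_cases hsz : s = 0
    · rw [hsz]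
      exact mul_nonneg hnpos.le (dot_self_nonneg w)
    · have hspos : 0 < s := lt_of_le_of_ne hs0 (Ne.symm hsz)
      have hsqs : 0 < Real.sqrt s := Real.sqrt_pos.mpr hspos
      have hfact : Real.sqrt ((n:ℝ) * s) = Real.sqrt n * Real.sqrt s :=
        Real.sqrt_mul (Nat.cast_nonneg n) s
      have hstep : Real.sqrt s * Real.sqrt s ≤ (Real.sqrt (w ⬝ᵥ w) * Real.sqrt n) * Real.sqrt s := by
        rw [Real.mul_self_sqrt hs0]
        calc s = w ⬝ᵥ (Gs *ᵥ u) := h1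
          _ ≤ Real.sqrt (w ⬝ᵥ w) * Real.sqrt ((n:ℝ) * s) := hCS
          _ = (Real.sqrt (w ⬝ᵥ w) * Real.sqrt n) * Real.sqrt s := by rw [hfact]; ring
      have hs' : Real.sqrt s ≤ Real.sqrt (w ⬝ᵥ w) * Real.sqrt n :=
        le_of_mul_le_mul_right hstep hsqs
      calc s = Real.sqrt s * Real.sqrt s := (Real.mul_self_sqrt hs0).symm
        _ ≤ (Real.sqrt (w ⬝ᵥ w) * Real.sqrt n) * (Real.sqrt (w ⬝ᵥ w) * Real.sqrt n) :=
            mul_le_mul hs' hs' (Real.sqrt_nonneg _)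
              (mul_nonneg (Real.sqrt_nonneg _) (Real.sqrt_nonneg _))
        _ = (Real.sqrt (w ⬝ᵥ w) * Real.sqrt (w ⬝ᵥ w)) * (Real.sqrt n * Real.sqrt n) := by ring
        _ = (n:ℝ) * (w ⬝ᵥ w) := by
            rw [Real.mul_self_sqrt (dot_self_nonneg w), Real.mul_self_sqrt (Nat.cast_nonneg n)]
            ring
  have hMv : ∀ v : Fin d → ℝ, (M *ᵥ v) ⬝ᵥ (M *ᵥ v) ≤ ((n:ℝ)) ^ 2 * (v ⬝ᵥ v) := by
    intro v
    have hmv : M *ᵥ v = Gsᵀ *ᵥ (G *ᵥ v) := by rw [hM, ← Matrix.mulVec_mulVec]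
    rw [hmv]
    calc (Gsᵀ *ᵥ (G *ᵥ v)) ⬝ᵥ (Gsᵀ *ᵥ (G *ᵥ v)) ≤ (n:ℝ) * ((G *ᵥ v) ⬝ᵥ (G *ᵥ v)) := hGsW _
      _ = (n:ℝ) * ((n:ℝ) * (v ⬝ᵥ v)) := by rw [hGv]
      _ = (n:ℝ)^2 * (v ⬝ᵥ v) := by ring
  have hnuc : Matrix.trace (Mᵀ * M) ≤ (n:ℝ) * nuclearNorm M :=
    trace_le_mul_nuclearNorm M n (Nat.cast_nonneg n) hMv
  -- combine everything
  have hrineq : (n:ℝ) * r ^ 2 ≤ 4 * opNorm Δ * Real.sqrt ((n:ℝ)*d) * r := by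
    nlinarith [key, hnuc, hr2]
  have hKeq : 4 * opNorm Δ * Real.sqrt ((n:ℝ)*d) / n = 4 * Real.sqrt d * opNorm Δ / Real.sqrt n := by
    have hsnpos : 0 < Real.sqrt n := Real.sqrt_pos.mpr hnpos
    rw [Real.sqrt_mul hnpos.le]
    rw [div_eq_div_iff (ne_of_gt hnpos) (ne_of_gt hsnpos)]
    have h : 4 * opNorm Δ * (Real.sqrt n * Real.sqrt d) * Real.sqrt n
        = 4 * Real.sqrt d * opNorm Δ * (Real.sqrt n * Real.sqrt n) := by ring
    rw [h, Real.mul_self_sqrt hnpos.le]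
  have hmem : r ∈ {r : ℝ | ∃ Q : Matrix (Fin d) (Fin d) ℝ, Qᵀ * Q = 1 ∧
      r = frobNorm (G - Gs * Q)} := ⟨Q, hQ, rfl⟩
  have hinf := csInf_le hBdd hmem
  by_cases hrz : r = 0
  · rw [hrz] at hinf
    exact hinf.trans hRHS0
  · have hrpos : 0 < r := lt_of_le_of_ne hr0 (Ne.symm hrz)
    have hrK : r ≤ 4 * opNorm Δ * Real.sqrt ((n:ℝ)*d) / n := by
      rw [le_div_iff₀ hnpos]
      have : ((n:ℝ) * r) * r ≤ (4 * opNorm Δ * Real.sqrt ((n:ℝ)*d)) * r := by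
        calc ((n:ℝ) * r) * r = (n:ℝ) * r ^ 2 := by ring
          _ ≤ 4 * opNorm Δ * Real.sqrt ((n:ℝ)*d) * r := hrineq
      have := le_of_mul_le_mul_right this hrpos
      linarith [this]
    rw [hKeq] at hrK
    exact hinf.trans hrK
end

section
/- For any two d×d orthonormal matrices X, Y (viewed as unit-Frobenius-norm tangent vectors), the sectional curvature of SO(d) with bi-invariant metric satisfies K(X,Y) = (1/4)‖[X,Y]‖_F² ≤ 1/2, where [X,Y] = XY − YX is the commutator; in particular ‖XY − YX‖_F² ≤ 2‖X‖_F²‖Y‖_F² for all real d×d matrices X, Y. -/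
open Matrix BigOperators Finset

set_option maxHeartbeats 1000000

namespace BWproof

variable {d : ℕ}

/-- Sum of squares of entries. -/
def F2 (A : Matrix (Fin d) (Fin d) ℝ) : ℝ := ∑ i, ∑ j, (A i j)^2

lemma F2_nonneg (A : Matrix (Fin d) (Fin d) ℝ) : 0 ≤ F2 A := by
  unfold F2; positivity

lemma F2_eq_trace (A : Matrix (Fin d) (Fin d) ℝ) : F2 A = (Aᵀ * A).trace := by
  unfold F2
  rw [Matrix.trace]
  rw [Finset.sum_comm]
  congr 1; ext j
  simp [Matrix.mul_apply, Matrix.diag, pow_two]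

lemma F2_conj {U V A : Matrix (Fin d) (Fin d) ℝ} (hU : U * Uᵀ = 1) (hV : Vᵀ * V = 1) :
    F2 (Uᵀ * A * V) = F2 A := by
  have hV2 : V * Vᵀ = 1 := mul_eq_one_comm.mp hV
  rw [F2_eq_trace, F2_eq_trace]
  have h1 : (Uᵀ * A * V)ᵀ * (Uᵀ * A * V) = Vᵀ * (Aᵀ * A) * V := by
    rw [Matrix.transpose_mul, Matrix.transpose_mul, Matrix.transpose_transpose]
    calc Vᵀ * (Aᵀ * U) * (Uᵀ * A * V) = Vᵀ * Aᵀ * (U * Uᵀ) * (A * V) := by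
          noncomm_ring
      _ = Vᵀ * (Aᵀ * A) * V := by rw [hU]; noncomm_ring
  rw [h1]
  calc (Vᵀ * (Aᵀ * A) * V).trace = (V * (Vᵀ * (Aᵀ * A))).trace :=
        Matrix.trace_mul_comm _ _
    _ = (Aᵀ * A).trace := by rw [← Matrix.mul_assoc, hV2, Matrix.one_mul]

lemma dot_orth {U : Matrix (Fin d) (Fin d) ℝ} (hU : U * Uᵀ = 1) (z : Fin d → ℝ) :
    (Uᵀ *ᵥ z) ⬝ᵥ (Uᵀ *ᵥ z) = z ⬝ᵥ z := by
  rw [Matrix.dotProduct_mulVec, Matrix.vecMul_transpose, Matrix.mulVec_mulVec, hU, Matrix.one_mulVec]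

/-- Popoviciu style scalar bound. -/
lemma popoviciu (μ w : Fin d → ℝ) (hw : ∀ k, 0 ≤ w k) (hsum : ∑ k, w k = 2) :
    ∑ k, (μ k)^2 * w k ≤ ∑ k, (μ k)^2 + (∑ k, μ k * w k)^2 / 2 := by
  have hne : (Finset.univ : Finset (Fin d)).Nonempty := by
    by_contra h
    rw [Finset.not_nonempty_iff_eq_empty] at h
    rw [h] at hsum; simp at hsum
  obtain ⟨kM, _, hM⟩ := Finset.exists_max_image Finset.univ μ hne
  obtain ⟨km, _, hm⟩ := Finset.exists_min_image Finset.univ μ hne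
  set M := μ kM with hMdef
  set m := μ km with hmdef
  have hMk : ∀ k, μ k ≤ M := fun k => hM k (Finset.mem_univ k)
  have hmk : ∀ k, m ≤ μ k := fun k => hm k (Finset.mem_univ k)
  set E := ∑ k, μ k * w k with hE
  have step1 : ∑ k, (μ k)^2 * w k ≤ (M + m) * E - 2 * (M * m) := by
    have h1 : ∀ k, (μ k)^2 * w k ≤ ((M + m) * μ k - M * m) * w k := by
      intro k
      have h0 : 0 ≤ (M - μ k) * (μ k - m) :=
        mul_nonneg (sub_nonneg.mpr (hMk k)) (sub_nonneg.mpr (hmk k))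
      have : (μ k)^2 ≤ (M + m) * μ k - M * m := by nlinarith
      exact mul_le_mul_of_nonneg_right this (hw k)
    calc ∑ k, (μ k)^2 * w k ≤ ∑ k, ((M + m) * μ k - M * m) * w k :=
          Finset.sum_le_sum (fun k _ => h1 k)
      _ = (M + m) * E - M * m * (∑ k, w k) := by
          rw [hE, Finset.mul_sum, Finset.mul_sum, ← Finset.sum_sub_distrib]
          congr 1; ext k; ring
      _ = (M + m) * E - 2 * (M * m) := by rw [hsum]; ring
  have hsumsq : 0 ≤ ∑ k, (μ k)^2 := by positivity
  have step2 : (M + m) * E - 2 * (M * m) ≤ ∑ k, (μ k)^2 + E^2 / 2 := by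
    by_cases hMm : M = m
    · -- all equal
      have hsq : M^2 ≤ ∑ k, (μ k)^2 := by
        calc M^2 = ∑ k ∈ ({kM} : Finset (Fin d)), (μ k)^2 := by
              simp [hMdef]
          _ ≤ ∑ k, (μ k)^2 := Finset.sum_le_sum_of_subset_of_nonneg
              (Finset.subset_univ _) (fun k _ _ => sq_nonneg _)
      nlinarith [sq_nonneg (E - (M + m)), sq_nonneg (M - m)]
    · have hkne : kM ≠ km := by
        intro h; apply hMm; rw [hMdef, hmdef, h]
      have hsq2 : M^2 + m^2 ≤ ∑ k, (μ k)^2 := by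
        calc M^2 + m^2 = ∑ k ∈ ({kM, km} : Finset (Fin d)), (μ k)^2 := by
              rw [Finset.sum_pair hkne]
          _ ≤ ∑ k, (μ k)^2 := Finset.sum_le_sum_of_subset_of_nonneg
              (Finset.subset_univ _) (fun k _ _ => sq_nonneg _)
      nlinarith [sq_nonneg (E - (M + m)), sq_nonneg (M - m), sq_nonneg (M + m)]
  linarith

lemma herm_of_symm {S : Matrix (Fin d) (Fin d) ℝ} (hS : Sᵀ = S) : S.IsHermitian := by
  have : Sᴴ = Sᵀ := by ext i j; simp [conjTranspose_apply]
  unfold Matrix.IsHermitian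
  rw [this, hS]

lemma F2_diagonal (μ : Fin d → ℝ) : F2 (diagonal μ) = ∑ k, (μ k)^2 := by
  have h : ∀ i j, (diagonal μ i j)^2 = if j = i then (μ i)^2 else 0 := by
    intro i j; by_cases h : j = i <;> simp [diagonal_apply, h]
    · intro h'; exact absurd h'.symm h
  unfold F2
  simp_rw [h]
  simp

/-- Key lemma (variance bound): for symmetric `S` and unit vectors `u, v`,
`2‖Su‖² + 2‖Sv‖² ≤ 2‖S‖_F² + (uᵀSu + vᵀSv)²`. -/
lemma KL {S : Matrix (Fin d) (Fin d) ℝ} (hS : Sᵀ = S) (u v : Fin d → ℝ)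
    (hu : u ⬝ᵥ u = 1) (hv : v ⬝ᵥ v = 1) :
    2 * ((S *ᵥ u) ⬝ᵥ (S *ᵥ u)) + 2 * ((S *ᵥ v) ⬝ᵥ (S *ᵥ v)) ≤
      2 * F2 S + (u ⬝ᵥ (S *ᵥ u) + v ⬝ᵥ (S *ᵥ v))^2 := by
  have hH : S.IsHermitian := herm_of_symm hS
  set W : Matrix (Fin d) (Fin d) ℝ := (hH.eigenvectorUnitary : Matrix (Fin d) (Fin d) ℝ) with hWdef
  set μ : Fin d → ℝ := hH.eigenvalues with hμdef
  have hWstar : star W = Wᵀ := by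
    rw [Matrix.star_eq_conjTranspose]; ext i j; simp [conjTranspose_apply]
  have hW1 : Wᵀ * W = 1 := by
    have := Matrix.mem_unitaryGroup_iff'.mp hH.eigenvectorUnitary.2
    rw [← hWstar]; exact this
  have hW2 : W * Wᵀ = 1 := mul_eq_one_comm.mp hW1
  have hspec : S = W * diagonal μ * Wᵀ := by
    have h := hH.spectral_theorem
    have e2 : diagonal (RCLike.ofReal ∘ hH.eigenvalues) = diagonal μ := by
      ext i j; simp [diagonal, hμdef]
    rw [e2, Unitary.conjStarAlgAut_apply, ← hWdef, hWstar] at h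
    exact h
  set p : Fin d → ℝ := Wᵀ *ᵥ u with hp
  set q : Fin d → ℝ := Wᵀ *ᵥ v with hq
  have hdiagmul : ∀ (x : Fin d → ℝ), (diagonal μ) *ᵥ x = fun k => μ k * x k := by
    intro x; ext k; simp [mulVec_diagonal]
  have hSu : S *ᵥ u = W *ᵥ (fun k => μ k * p k) := by
    rw [hspec, ← Matrix.mulVec_mulVec, ← Matrix.mulVec_mulVec, ← hp, hdiagmul]
  have hSv : S *ᵥ v = W *ᵥ (fun k => μ k * q k) := by
    rw [hspec, ← Matrix.mulVec_mulVec, ← Matrix.mulVec_mulVec, ← hq, hdiagmul]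
  have hWdot : ∀ (x y : Fin d → ℝ), (W *ᵥ x) ⬝ᵥ (W *ᵥ y) = x ⬝ᵥ y := by
    intro x y
    rw [Matrix.dotProduct_mulVec, ← Matrix.mulVec_transpose, Matrix.mulVec_mulVec, hW1,
      Matrix.one_mulVec]
  have hWdot' : ∀ (x y : Fin d → ℝ), x ⬝ᵥ (W *ᵥ y) = (Wᵀ *ᵥ x) ⬝ᵥ y := by
    intro x y
    rw [Matrix.dotProduct_mulVec, ← Matrix.mulVec_transpose]
  have hpp : p ⬝ᵥ p = 1 := by rw [hp, dot_orth hW2, hu]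
  have hqq : q ⬝ᵥ q = 1 := by rw [hq, dot_orth hW2, hv]
  have e1 : (S *ᵥ u) ⬝ᵥ (S *ᵥ u) = ∑ k, (μ k)^2 * (p k)^2 := by
    rw [hSu, hWdot]
    simp only [dotProduct]
    exact Finset.sum_congr rfl (fun k _ => by ring)
  have e2 : (S *ᵥ v) ⬝ᵥ (S *ᵥ v) = ∑ k, (μ k)^2 * (q k)^2 := by
    rw [hSv, hWdot]
    simp only [dotProduct]
    exact Finset.sum_congr rfl (fun k _ => by ring)
  have e3 : u ⬝ᵥ (S *ᵥ u) = ∑ k, μ k * (p k)^2 := by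
    rw [hSu, hWdot', ← hp]
    simp only [dotProduct]
    exact Finset.sum_congr rfl (fun k _ => by ring)
  have e4 : v ⬝ᵥ (S *ᵥ v) = ∑ k, μ k * (q k)^2 := by
    rw [hSv, hWdot', ← hq]
    simp only [dotProduct]
    exact Finset.sum_congr rfl (fun k _ => by ring)
  have e5 : F2 S = ∑ k, (μ k)^2 := by
    have h6 : S = (Wᵀ)ᵀ * diagonal μ * Wᵀ := by
      rw [Matrix.transpose_transpose]; exact hspec
    rw [h6]
    have := F2_conj (U := Wᵀ) (V := Wᵀ) (A := diagonal μ)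
      (by rw [Matrix.transpose_transpose]; exact hW1) hW2
    rw [this, F2_diagonal]
  have hwsum : ∑ k, ((p k)^2 + (q k)^2) = 2 := by
    have h7 : ∑ k, ((p k)^2 + (q k)^2) = (∑ k, p k * p k) + ∑ k, q k * q k := by
      rw [← Finset.sum_add_distrib]
      exact Finset.sum_congr rfl (fun k _ => by ring)
    rw [h7]
    rw [show (∑ k, p k * p k) = p ⬝ᵥ p from rfl, show (∑ k, q k * q k) = q ⬝ᵥ q from rfl,
      hpp, hqq]
    norm_num
  have key := popoviciu μ (fun k => (p k)^2 + (q k)^2) (fun k => by positivity) hwsum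
  have expand1 : ∑ k, (μ k)^2 * ((p k)^2 + (q k)^2)
      = (∑ k, (μ k)^2 * (p k)^2) + ∑ k, (μ k)^2 * (q k)^2 := by
    rw [← Finset.sum_add_distrib]
    exact Finset.sum_congr rfl (fun k _ => by ring)
  have expand2 : ∑ k, μ k * ((p k)^2 + (q k)^2)
      = (∑ k, μ k * (p k)^2) + ∑ k, μ k * (q k)^2 := by
    rw [← Finset.sum_add_distrib]
    exact Finset.sum_congr rfl (fun k _ => by ring)
  rw [expand1, expand2] at key
  rw [e1, e2, e3, e4, e5]
  nlinarith [key]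

lemma sum_erase_eq (f : Fin d → Fin d → ℝ) :
    ∑ a, ∑ b ∈ Finset.univ.erase a, f a b = (∑ a, ∑ b, f a b) - ∑ a, f a a := by
  have h : ∀ a : Fin d, ∑ b ∈ Finset.univ.erase a, f a b = (∑ b, f a b) - f a a := by
    intro a
    have := Finset.add_sum_erase Finset.univ (f a) (Finset.mem_univ a)
    linarith
  rw [Finset.sum_congr rfl (fun a _ => h a), Finset.sum_sub_distrib]

lemma conj_entry (B U : Matrix (Fin d) (Fin d) ℝ) (a b : Fin d) :
    (Uᵀ * B * U) a b = (fun i => U i a) ⬝ᵥ (B *ᵥ (fun i => U i b)) := by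
  simp only [Matrix.mul_apply, Matrix.mulVec, dotProduct, Matrix.transpose_apply,
    Finset.sum_mul, Finset.mul_sum]
  rw [Finset.sum_comm]
  exact Finset.sum_congr rfl fun i _ => Finset.sum_congr rfl fun j _ => by ring

lemma dot_symm_swap {B : Matrix (Fin d) (Fin d) ℝ} (hB : Bᵀ = B) (x y : Fin d → ℝ) :
    x ⬝ᵥ (B *ᵥ y) = y ⬝ᵥ (B *ᵥ x) := by
  rw [Matrix.dotProduct_mulVec, ← Matrix.mulVec_transpose, hB, dotProduct_comm]

lemma row_parseval {U : Matrix (Fin d) (Fin d) ℝ} (hU2 : U * Uᵀ = 1) (z : Fin d → ℝ) :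
    ∑ b, ((fun i => U i b) ⬝ᵥ z)^2 = z ⬝ᵥ z := by
  have h : ∀ b, (fun i => U i b) ⬝ᵥ z = (Uᵀ *ᵥ z) b := by
    intro b; simp [Matrix.mulVec, dotProduct, Matrix.transpose_apply]
  calc ∑ b, ((fun i => U i b) ⬝ᵥ z)^2 = ∑ b, (Uᵀ *ᵥ z) b * (Uᵀ *ᵥ z) b := by
        refine Finset.sum_congr rfl fun b _ => ?_
        rw [h b]; ring
    _ = (Uᵀ *ᵥ z) ⬝ᵥ (Uᵀ *ᵥ z) := rfl
    _ = z ⬝ᵥ z := dot_orth hU2 z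

lemma conjT (A U : Matrix (Fin d) (Fin d) ℝ) : (Uᵀ * A * U)ᵀ = Uᵀ * Aᵀ * U := by
  rw [Matrix.transpose_mul, Matrix.transpose_mul, Matrix.transpose_transpose,
    Matrix.mul_assoc]

lemma double_sum_avg (f g : Fin d → Fin d → ℝ) :
    ∑ a, ∑ b, (f a b + g a b)/2 = ((∑ a, ∑ b, f a b) + (∑ a, ∑ b, g a b))/2 := by
  have h1 : ∀ a, ∑ b, (f a b + g a b)/2 = ((∑ b, f a b) + (∑ b, g a b))/2 := by
    intro a
    calc ∑ b, (f a b + g a b)/2 = (∑ b, (f a b + g a b))/2 := by rw [Finset.sum_div]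
      _ = ((∑ b, f a b) + (∑ b, g a b))/2 := by rw [Finset.sum_add_distrib]
  calc ∑ a, ∑ b, (f a b + g a b)/2 = ∑ a, ((∑ b, f a b) + (∑ b, g a b))/2 :=
      Finset.sum_congr rfl fun a _ => h1 a
    _ = (∑ a, ((∑ b, f a b) + (∑ b, g a b)))/2 := by rw [Finset.sum_div]
    _ = ((∑ a, ∑ b, f a b) + (∑ a, ∑ b, g a b))/2 := by rw [Finset.sum_add_distrib]

lemma core (X Y : Matrix (Fin d) (Fin d) ℝ) (hdet : Y.det ≠ 0) :
    F2 (X*Y - Y*X) ≤ 2 * F2 X * F2 Y := by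
  classical
  have hAt : (Yᵀ * Y)ᵀ = Yᵀ * Y := by rw [Matrix.transpose_mul, Matrix.transpose_transpose]
  have hAh : (Yᵀ * Y).IsHermitian := herm_of_symm hAt
  set ev : Fin d → ℝ := hAh.eigenvalues with hev
  have hpsd : (Yᵀ * Y).PosSemidef := by
    have h := Matrix.posSemidef_conjTranspose_mul_self Y
    have e : Yᴴ = Yᵀ := by ext i j; simp [conjTranspose_apply]
    rwa [e] at h
  have hev0 : ∀ a, 0 ≤ ev a := fun a => hpsd.eigenvalues_nonneg a
  have hdet2 : (Yᵀ * Y).det ≠ 0 := by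
    rw [Matrix.det_mul, Matrix.det_transpose]; exact mul_ne_zero hdet hdet
  have hprod : (Yᵀ * Y).det = ∏ a, ev a := by
    have := hAh.det_eq_prod_eigenvalues; simpa using this
  have hevpos : ∀ a, 0 < ev a := by
    intro a
    rcases (hev0 a).lt_or_eq with h | h
    · exact h
    · exfalso; apply hdet2
      rw [hprod]
      exact Finset.prod_eq_zero (Finset.mem_univ a) h.symm
  set V : Matrix (Fin d) (Fin d) ℝ := (hAh.eigenvectorUnitary : Matrix (Fin d) (Fin d) ℝ)
    with hVdef
  have hVstar : star V = Vᵀ := by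
    rw [Matrix.star_eq_conjTranspose]; ext i j; simp [conjTranspose_apply]
  have hV1 : Vᵀ * V = 1 := by
    have := Matrix.mem_unitaryGroup_iff'.mp hAh.eigenvectorUnitary.2
    rw [← hVstar]; exact this
  have hV2 : V * Vᵀ = 1 := mul_eq_one_comm.mp hV1
  have hspecA : Yᵀ * Y = V * diagonal ev * Vᵀ := by
    have h := hAh.spectral_theorem
    have e2 : diagonal (RCLike.ofReal ∘ hAh.eigenvalues) = diagonal ev := by
      ext i j; simp [diagonal, hev]
    rw [e2, Unitary.conjStarAlgAut_apply, ← hVdef, hVstar] at h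
    exact h
  set σ : Fin d → ℝ := fun a => Real.sqrt (ev a) with hσdef
  have hσpos : ∀ a, 0 < σ a := fun a => Real.sqrt_pos.mpr (hevpos a)
  have hσsq : ∀ a, (σ a)^2 = ev a := fun a => Real.sq_sqrt (hev0 a)
  set Dinv : Matrix (Fin d) (Fin d) ℝ := diagonal (fun a => (σ a)⁻¹) with hDdef
  set U : Matrix (Fin d) (Fin d) ℝ := Y * V * Dinv with hUdef
  have hUt : Uᵀ = Dinv * (Vᵀ * Yᵀ) := by
    rw [hUdef, Matrix.transpose_mul, Matrix.transpose_mul, hDdef, Matrix.diagonal_transpose]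
  have hU1 : Uᵀ * U = 1 := by
    rw [hUt, hUdef]
    have h1 : Dinv * (Vᵀ * Yᵀ) * (Y * V * Dinv) = Dinv * (Vᵀ * (Yᵀ * Y) * V) * Dinv := by
      simp only [Matrix.mul_assoc]
    rw [h1, hspecA]
    have h2 : Vᵀ * (V * diagonal ev * Vᵀ) * V = (Vᵀ * V) * diagonal ev * (Vᵀ * V) := by
      simp only [Matrix.mul_assoc]
    rw [h2, hV1, Matrix.one_mul, Matrix.mul_one, hDdef,
      Matrix.diagonal_mul_diagonal, Matrix.diagonal_mul_diagonal]
    have harg : (fun a => (σ a)⁻¹ * ev a * (σ a)⁻¹) = (fun _ => (1:ℝ)) := by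
      funext a
      rw [← hσsq a, pow_two]
      field_simp
      rw [div_self (hσpos a).ne']
    rw [harg, Matrix.diagonal_one]
  have hU2 : U * Uᵀ = 1 := mul_eq_one_comm.mp hU1
  have hYV : Y * V = U * diagonal σ := by
    rw [hUdef, Matrix.mul_assoc, Matrix.mul_assoc, hDdef, Matrix.diagonal_mul_diagonal]
    rw [show (fun a => (σ a)⁻¹ * σ a) = fun _ => (1:ℝ) by
      funext a; exact inv_mul_cancel₀ (hσpos a).ne']
    rw [Matrix.diagonal_one, Matrix.mul_one]
  have hUY : Uᵀ * Y = diagonal σ * Vᵀ := by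
    rw [hUt]
    have h1 : Dinv * (Vᵀ * Yᵀ) * Y = Dinv * (Vᵀ * (Yᵀ * Y)) := by
      simp only [Matrix.mul_assoc]
    calc Dinv * (Vᵀ * Yᵀ) * Y = Dinv * (Vᵀ * (Yᵀ * Y)) := h1
      _ = Dinv * (Vᵀ * (V * diagonal ev * Vᵀ)) := by rw [hspecA]
      _ = Dinv * ((Vᵀ * V) * diagonal ev * Vᵀ) := by simp only [Matrix.mul_assoc]
      _ = Dinv * diagonal ev * Vᵀ := by rw [hV1, Matrix.one_mul, Matrix.mul_assoc]
      _ = diagonal σ * Vᵀ := by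
          rw [hDdef, Matrix.diagonal_mul_diagonal]
          have harg : (fun a => (σ a)⁻¹ * ev a) = σ := by
            funext a
            rw [← hσsq a, pow_two, ← mul_assoc, inv_mul_cancel₀ (hσpos a).ne', one_mul]
          rw [harg]
  set P : Matrix (Fin d) (Fin d) ℝ := Uᵀ * X * U with hPdef
  set Q : Matrix (Fin d) (Fin d) ℝ := Vᵀ * X * V with hQdef
  have hMid1 : Uᵀ * (X*Y) * V = P * diagonal σ := by
    calc Uᵀ * (X*Y) * V = Uᵀ * X * (Y * V) := by simp only [Matrix.mul_assoc]
      _ = Uᵀ * X * (U * diagonal σ) := by rw [hYV]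
      _ = P * diagonal σ := by rw [hPdef]; simp only [Matrix.mul_assoc]
  have hMid2 : Uᵀ * (Y*X) * V = diagonal σ * Q := by
    calc Uᵀ * (Y*X) * V = (Uᵀ * Y) * (X * V) := by simp only [Matrix.mul_assoc]
      _ = diagonal σ * Vᵀ * (X * V) := by rw [hUY]
      _ = diagonal σ * Q := by rw [hQdef]; simp only [Matrix.mul_assoc]
  have hMid : Uᵀ * (X*Y - Y*X) * V = P * diagonal σ - diagonal σ * Q := by
    rw [Matrix.mul_sub, Matrix.sub_mul, hMid1, hMid2]
  have hF2C : F2 (X*Y - Y*X) = ∑ a, ∑ b, (P a b * σ b - σ a * Q a b)^2 := by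
    have h1 : F2 (X*Y - Y*X) = F2 (Uᵀ * (X*Y-Y*X) * V) := (F2_conj hU2 hV1).symm
    rw [h1, hMid]
    unfold F2
    refine Finset.sum_congr rfl fun a _ => Finset.sum_congr rfl fun b _ => ?_
    rw [Matrix.sub_apply, Matrix.mul_diagonal, Matrix.diagonal_mul]
  -- symmetric and skew parts of X
  set Sm : Matrix (Fin d) (Fin d) ℝ := (1/2 : ℝ) • (X + Xᵀ) with hSmdef
  set Wm : Matrix (Fin d) (Fin d) ℝ := (1/2 : ℝ) • (X - Xᵀ) with hWmdef
  have hSmT : Smᵀ = Sm := by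
    rw [hSmdef]; ext i j
    simp [Matrix.transpose_apply, Matrix.add_apply, Matrix.smul_apply]
    ring
  set PS : Matrix (Fin d) (Fin d) ℝ := Uᵀ * Sm * U with hPSdef
  set QS : Matrix (Fin d) (Fin d) ℝ := Vᵀ * Sm * V with hQSdef
  set PW : Matrix (Fin d) (Fin d) ℝ := Uᵀ * Wm * U with hPWdef
  set QW : Matrix (Fin d) (Fin d) ℝ := Vᵀ * Wm * V with hQWdef
  have hPT : Pᵀ = Uᵀ * Xᵀ * U := by rw [hPdef, conjT]
  have hQT : Qᵀ = Vᵀ * Xᵀ * V := by rw [hQdef, conjT]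
  have hPSm : PS = (1/2 : ℝ) • (P + Pᵀ) := by
    rw [hPSdef, hSmdef, Matrix.mul_smul, Matrix.smul_mul, Matrix.mul_add, Matrix.add_mul,
      ← hPdef, ← hPT]
  have hQSm : QS = (1/2 : ℝ) • (Q + Qᵀ) := by
    rw [hQSdef, hSmdef, Matrix.mul_smul, Matrix.smul_mul, Matrix.mul_add, Matrix.add_mul,
      ← hQdef, ← hQT]
  have hPWm : PW = (1/2 : ℝ) • (P - Pᵀ) := by
    rw [hPWdef, hWmdef, Matrix.mul_smul, Matrix.smul_mul, Matrix.mul_sub, Matrix.sub_mul,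
      ← hPdef, ← hPT]
  have hQWm : QW = (1/2 : ℝ) • (Q - Qᵀ) := by
    rw [hQWdef, hWmdef, Matrix.mul_smul, Matrix.smul_mul, Matrix.mul_sub, Matrix.sub_mul,
      ← hQdef, ← hQT]
  have hPSe : ∀ a b, PS a b = (P a b + P b a)/2 := by
    intro a b; rw [hPSm]
    simp [Matrix.smul_apply, Matrix.add_apply, Matrix.transpose_apply]
    ring
  have hQSe : ∀ a b, QS a b = (Q a b + Q b a)/2 := by
    intro a b; rw [hQSm]
    simp [Matrix.smul_apply, Matrix.add_apply, Matrix.transpose_apply]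
    ring
  have hPWe : ∀ a b, PW a b = (P a b - P b a)/2 := by
    intro a b; rw [hPWm]
    simp [Matrix.smul_apply, Matrix.sub_apply, Matrix.transpose_apply]
    ring
  have hQWe : ∀ a b, QW a b = (Q a b - Q b a)/2 := by
    intro a b; rw [hQWm]
    simp [Matrix.smul_apply, Matrix.sub_apply, Matrix.transpose_apply]
    ring
  -- unit columns
  have hucol : ∀ a, (fun i => U i a) ⬝ᵥ (fun i => U i a) = 1 := by
    intro a
    have h : (Uᵀ * U) a a = 1 := by rw [hU1, Matrix.one_apply_eq]
    calc (fun i => U i a) ⬝ᵥ (fun i => U i a) = (Uᵀ * U) a a := by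
          simp [Matrix.mul_apply, dotProduct, Matrix.transpose_apply]
      _ = 1 := h
  have hvcol : ∀ a, (fun i => V i a) ⬝ᵥ (fun i => V i a) = 1 := by
    intro a
    have h : (Vᵀ * V) a a = 1 := by rw [hV1, Matrix.one_apply_eq]
    calc (fun i => V i a) ⬝ᵥ (fun i => V i a) = (Vᵀ * V) a a := by
          simp [Matrix.mul_apply, dotProduct, Matrix.transpose_apply]
      _ = 1 := h
  -- KL instantiated per index a
  have hKLa : ∀ a, 2 * (∑ b, (PS a b)^2) + 2 * (∑ b, (QS a b)^2)
      ≤ 2 * F2 Sm + (PS a a + QS a a)^2 := by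
    intro a
    have h := KL hSmT (fun i => U i a) (fun i => V i a) (hucol a) (hvcol a)
    have b1 : (Sm *ᵥ (fun i => U i a)) ⬝ᵥ (Sm *ᵥ (fun i => U i a)) = ∑ b, (PS a b)^2 := by
      calc (Sm *ᵥ (fun i => U i a)) ⬝ᵥ (Sm *ᵥ (fun i => U i a))
          = ∑ b, ((fun i => U i b) ⬝ᵥ (Sm *ᵥ (fun i => U i a)))^2 :=
            (row_parseval hU2 _).symm
        _ = ∑ b, (PS a b)^2 := by
            refine Finset.sum_congr rfl fun b _ => ?_
            rw [hPSdef, conj_entry, dot_symm_swap hSmT]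
    have b2 : (Sm *ᵥ (fun i => V i a)) ⬝ᵥ (Sm *ᵥ (fun i => V i a)) = ∑ b, (QS a b)^2 := by
      calc (Sm *ᵥ (fun i => V i a)) ⬝ᵥ (Sm *ᵥ (fun i => V i a))
          = ∑ b, ((fun i => V i b) ⬝ᵥ (Sm *ᵥ (fun i => V i a)))^2 :=
            (row_parseval hV2 _).symm
        _ = ∑ b, (QS a b)^2 := by
            refine Finset.sum_congr rfl fun b _ => ?_
            rw [hQSdef, conj_entry, dot_symm_swap hSmT]
    have b3 : (fun i => U i a) ⬝ᵥ (Sm *ᵥ (fun i => U i a)) = PS a a := by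
      rw [hPSdef, conj_entry]
    have b4 : (fun i => V i a) ⬝ᵥ (Sm *ᵥ (fun i => V i a)) = QS a a := by
      rw [hQSdef, conj_entry]
    rw [b1, b2, b3, b4] at h
    exact h
  -- STEP 1: split diagonal / off-diagonal and Cauchy-Schwarz off-diagonal
  have e_split : ∑ a, ∑ b, (P a b * σ b - σ a * Q a b)^2
      = (∑ a, (P a a * σ a - σ a * Q a a)^2)
        + ∑ a, ∑ b ∈ Finset.univ.erase a, (P a b * σ b - σ a * Q a b)^2 := by
    have h := sum_erase_eq (fun a b => (P a b * σ b - σ a * Q a b)^2)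
    linarith
  have e_diag : ∑ a, (P a a * σ a - σ a * Q a a)^2 = ∑ a, ev a * (PS a a - QS a a)^2 := by
    refine Finset.sum_congr rfl fun a _ => ?_
    rw [hPSe a a, hQSe a a, ← hσsq a]; ring
  have h_cs : ∑ a, ∑ b ∈ Finset.univ.erase a, (P a b * σ b - σ a * Q a b)^2
      ≤ ∑ a, ∑ b ∈ Finset.univ.erase a, (ev a + ev b) * ((P a b)^2 + (Q a b)^2) := by
    refine Finset.sum_le_sum fun a _ => Finset.sum_le_sum fun b _ => ?_
    rw [← hσsq a, ← hσsq b]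
    nlinarith [sq_nonneg (σ a * P a b + σ b * Q a b)]
  -- STEP 2: symmetric/skew decomposition of the off-diagonal sum
  have hPpoint : ∀ a b, (PS a b)^2 + (PW a b)^2 = ((P a b)^2 + (P b a)^2)/2 := by
    intro a b; rw [hPSe, hPWe]; ring
  have hQpoint : ∀ a b, (QS a b)^2 + (QW a b)^2 = ((Q a b)^2 + (Q b a)^2)/2 := by
    intro a b; rw [hQSe, hQWe]; ring
  have h_fullswap : ∑ a, ∑ b, (ev a + ev b)*((P b a)^2 + (Q b a)^2)
      = ∑ a, ∑ b, (ev a + ev b)*((P a b)^2 + (Q a b)^2) := by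
    rw [Finset.sum_comm]
    exact Finset.sum_congr rfl fun a _ => Finset.sum_congr rfl fun b _ => by ring
  have e_sym_skew : ∑ a, ∑ b ∈ Finset.univ.erase a, (ev a + ev b) * ((P a b)^2 + (Q a b)^2)
      = ∑ a, ∑ b ∈ Finset.univ.erase a,
          (ev a + ev b) * ((PS a b)^2 + (PW a b)^2 + ((QS a b)^2 + (QW a b)^2)) := by
    have h1 := sum_erase_eq (fun a b => (ev a + ev b) * ((P a b)^2 + (Q a b)^2))
    have h2 := sum_erase_eq (fun a b =>
      (ev a + ev b) * ((PS a b)^2 + (PW a b)^2 + ((QS a b)^2 + (QW a b)^2)))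
    have hfull : ∑ a, ∑ b, (ev a + ev b) * ((PS a b)^2 + (PW a b)^2 + ((QS a b)^2 + (QW a b)^2))
        = ∑ a, ∑ b, (ev a + ev b) * ((P a b)^2 + (Q a b)^2) := by
      have e1 : ∀ a b : Fin d, (ev a + ev b) * ((PS a b)^2 + (PW a b)^2 + ((QS a b)^2 + (QW a b)^2))
          = ((ev a + ev b)*((P a b)^2 + (Q a b)^2) + (ev a + ev b)*((P b a)^2 + (Q b a)^2))/2 := by
        intro a b
        rw [hPpoint a b, hQpoint a b]
        ring
      calc ∑ a, ∑ b, (ev a + ev b) * ((PS a b)^2 + (PW a b)^2 + ((QS a b)^2 + (QW a b)^2))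
          = ∑ a, ∑ b, ((ev a + ev b)*((P a b)^2 + (Q a b)^2)
              + (ev a + ev b)*((P b a)^2 + (Q b a)^2))/2 := by
            exact Finset.sum_congr rfl fun a _ => Finset.sum_congr rfl fun b _ => e1 a b
        _ = ((∑ a, ∑ b, (ev a + ev b)*((P a b)^2 + (Q a b)^2))
              + ∑ a, ∑ b, (ev a + ev b)*((P b a)^2 + (Q b a)^2))/2 :=
            double_sum_avg _ _
        _ = ∑ a, ∑ b, (ev a + ev b)*((P a b)^2 + (Q a b)^2) := by
            rw [h_fullswap]; ring
    have hdiagpt : ∑ a, (ev a + ev a) * ((PS a a)^2 + (PW a a)^2 + ((QS a a)^2 + (QW a a)^2))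
        = ∑ a, (ev a + ev a)*((P a a)^2 + (Q a a)^2) := by
      refine Finset.sum_congr rfl fun a _ => ?_
      rw [hPSe, hPWe, hQSe, hQWe]; ring
    rw [h1, h2, hfull]
    linarith [hdiagpt]
  have e_g2split : ∑ a, ∑ b ∈ Finset.univ.erase a,
        (ev a + ev b) * ((PS a b)^2 + (PW a b)^2 + ((QS a b)^2 + (QW a b)^2))
      = (∑ a, ∑ b ∈ Finset.univ.erase a, (ev a + ev b) * ((PS a b)^2 + (QS a b)^2))
        + ∑ a, ∑ b ∈ Finset.univ.erase a, (ev a + ev b) * ((PW a b)^2 + (QW a b)^2) := by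
    rw [← Finset.sum_add_distrib]
    refine Finset.sum_congr rfl fun a _ => ?_
    rw [← Finset.sum_add_distrib]
    exact Finset.sum_congr rfl fun b _ => by ring
  -- STEP 3: skew part bound
  have hF2PW : F2 PW = F2 Wm := by rw [hPWdef]; exact F2_conj hU2 hU1
  have hF2QW : F2 QW = F2 Wm := by rw [hQWdef]; exact F2_conj hV2 hV1
  have h_skew : ∑ a, ∑ b ∈ Finset.univ.erase a, (ev a + ev b) * ((PW a b)^2 + (QW a b)^2)
      ≤ (∑ c, ev c) * (2 * F2 Wm) := by
    have step_a : ∑ a, ∑ b ∈ Finset.univ.erase a, (ev a + ev b) * ((PW a b)^2 + (QW a b)^2)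
        ≤ ∑ a, ∑ b ∈ Finset.univ.erase a, (∑ c, ev c) * ((PW a b)^2 + (QW a b)^2) := by
      refine Finset.sum_le_sum fun a _ => Finset.sum_le_sum fun b hb => ?_
      have hne : b ≠ a := Finset.ne_of_mem_erase hb
      have hle : ev a + ev b ≤ ∑ c, ev c := by
        have he : ev a + ev b = ∑ c ∈ ({a, b} : Finset (Fin d)), ev c := by
          rw [Finset.sum_pair (Ne.symm hne)]
        rw [he]
        exact Finset.sum_le_sum_of_subset_of_nonneg (Finset.subset_univ _)
          (fun c _ _ => hev0 c)
      exact mul_le_mul_of_nonneg_right hle (by positivity)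
    have step_b : ∑ a, ∑ b ∈ Finset.univ.erase a, (∑ c, ev c) * ((PW a b)^2 + (QW a b)^2)
        ≤ ∑ a, ∑ b, (∑ c, ev c) * ((PW a b)^2 + (QW a b)^2) := by
      refine Finset.sum_le_sum fun a _ => ?_
      refine Finset.sum_le_sum_of_subset_of_nonneg (Finset.erase_subset _ _)
        (fun b _ _ => ?_)
      have h0 : (0:ℝ) ≤ ∑ c, ev c := Finset.sum_nonneg fun c _ => hev0 c
      positivity
    have step_c : ∑ a, ∑ b, (∑ c, ev c) * ((PW a b)^2 + (QW a b)^2)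
        = (∑ c, ev c) * (2 * F2 Wm) := by
      have e1 : ∑ a, ∑ b, (∑ c, ev c) * ((PW a b)^2 + (QW a b)^2)
          = (∑ c, ev c) * ∑ a, ∑ b, ((PW a b)^2 + (QW a b)^2) := by
        rw [Finset.mul_sum]
        exact Finset.sum_congr rfl fun a _ => by rw [Finset.mul_sum]
      have e2 : ∑ a, ∑ b, ((PW a b)^2 + (QW a b)^2) = F2 PW + F2 QW := by
        unfold F2
        rw [← Finset.sum_add_distrib]
        exact Finset.sum_congr rfl fun a _ => by rw [← Finset.sum_add_distrib]
      rw [e1, e2, hF2PW, hF2QW]; ring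
    calc ∑ a, ∑ b ∈ Finset.univ.erase a, (ev a + ev b) * ((PW a b)^2 + (QW a b)^2)
        ≤ ∑ a, ∑ b ∈ Finset.univ.erase a, (∑ c, ev c) * ((PW a b)^2 + (QW a b)^2) := step_a
      _ ≤ ∑ a, ∑ b, (∑ c, ev c) * ((PW a b)^2 + (QW a b)^2) := step_b
      _ = (∑ c, ev c) * (2 * F2 Wm) := step_c
  -- STEP 4: symmetric part
  have hPSsym : ∀ a b, PS a b = PS b a := by intro a b; rw [hPSe, hPSe]; ring
  have hQSsym : ∀ a b, QS a b = QS b a := by intro a b; rw [hQSe, hQSe]; ring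
  have e_symoff : ∀ (M : Matrix (Fin d) (Fin d) ℝ), (∀ a b, M a b = M b a) →
      ∑ a, ∑ b ∈ Finset.univ.erase a, (ev a + ev b) * (M a b)^2
      = 2 * ∑ a, ev a * ((∑ b, (M a b)^2) - (M a a)^2) := by
    intro M hsym
    have h1 := sum_erase_eq (fun a b => (ev a + ev b) * (M a b)^2)
    have hswap : ∑ a, ∑ b, ev b * (M a b)^2 = ∑ a, ∑ b, ev a * (M a b)^2 := by
      rw [Finset.sum_comm]
      exact Finset.sum_congr rfl fun a _ => Finset.sum_congr rfl fun b _ => by rw [hsym b a]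
    have hfull : ∑ a, ∑ b, (ev a + ev b) * (M a b)^2
        = 2 * ∑ a, ev a * (∑ b, (M a b)^2) := by
      calc ∑ a, ∑ b, (ev a + ev b) * (M a b)^2
          = ∑ a, ∑ b, (ev a * (M a b)^2 + ev b * (M a b)^2) := by
            exact Finset.sum_congr rfl fun a _ => Finset.sum_congr rfl fun b _ => by ring
        _ = (∑ a, ∑ b, ev a * (M a b)^2) + ∑ a, ∑ b, ev b * (M a b)^2 := by
            rw [← Finset.sum_add_distrib]
            exact Finset.sum_congr rfl fun a _ => by rw [← Finset.sum_add_distrib]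
        _ = 2 * ∑ a, ∑ b, ev a * (M a b)^2 := by rw [hswap]; ring
        _ = 2 * ∑ a, ev a * (∑ b, (M a b)^2) := by
            congr 1
            exact Finset.sum_congr rfl fun a _ => (Finset.mul_sum _ _ _).symm
    have hdiag : ∑ a, (ev a + ev a) * (M a a)^2 = 2 * ∑ a, ev a * (M a a)^2 := by
      rw [Finset.mul_sum]
      exact Finset.sum_congr rfl fun a _ => by ring
    have hsub : 2 * ∑ a, ev a * ((∑ b, (M a b)^2) - (M a a)^2)
        = 2 * ∑ a, ev a * (∑ b, (M a b)^2) - 2 * ∑ a, ev a * (M a a)^2 := by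
      rw [← mul_sub]
      congr 1
      rw [← Finset.sum_sub_distrib]
      exact Finset.sum_congr rfl fun a _ => by ring
    rw [h1, hfull, hsub, hdiag]
  have e_PSoff := e_symoff PS hPSsym
  have e_QSoff := e_symoff QS hQSsym
  have e_gs_split : ∑ a, ∑ b ∈ Finset.univ.erase a, (ev a + ev b) * ((PS a b)^2 + (QS a b)^2)
      = (∑ a, ∑ b ∈ Finset.univ.erase a, (ev a + ev b) * (PS a b)^2)
        + ∑ a, ∑ b ∈ Finset.univ.erase a, (ev a + ev b) * (QS a b)^2 := by
    rw [← Finset.sum_add_distrib]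
    refine Finset.sum_congr rfl fun a _ => ?_
    rw [← Finset.sum_add_distrib]
    exact Finset.sum_congr rfl fun b _ => by ring
  have h_sym_total : (∑ a, ev a * (PS a a - QS a a)^2)
      + ∑ a, ∑ b ∈ Finset.univ.erase a, (ev a + ev b) * ((PS a b)^2 + (QS a b)^2)
      ≤ (∑ c, ev c) * (2 * F2 Sm) := by
    rw [e_gs_split, e_PSoff, e_QSoff]
    have hper : ∀ a : Fin d, ev a * (PS a a - QS a a)^2
        + 2*(ev a * ((∑ b, (PS a b)^2) - (PS a a)^2))
        + 2*(ev a * ((∑ b, (QS a b)^2) - (QS a a)^2)) ≤ ev a * (2 * F2 Sm) := by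
      intro a
      have h := hKLa a
      have hbr : (PS a a - QS a a)^2 + 2*((∑ b, (PS a b)^2) - (PS a a)^2)
          + 2*((∑ b, (QS a b)^2) - (QS a a)^2) ≤ 2 * F2 Sm := by
        nlinarith [h]
      calc ev a * (PS a a - QS a a)^2
            + 2*(ev a * ((∑ b, (PS a b)^2) - (PS a a)^2))
            + 2*(ev a * ((∑ b, (QS a b)^2) - (QS a a)^2))
          = ev a * ((PS a a - QS a a)^2 + 2*((∑ b, (PS a b)^2) - (PS a a)^2)
              + 2*((∑ b, (QS a b)^2) - (QS a a)^2)) := by ring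
        _ ≤ ev a * (2 * F2 Sm) := mul_le_mul_of_nonneg_left hbr (hev0 a)
    have e_comb : (∑ a, ev a * (PS a a - QS a a)^2)
        + 2 * (∑ a, ev a * ((∑ b, (PS a b)^2) - (PS a a)^2))
        + 2 * (∑ a, ev a * ((∑ b, (QS a b)^2) - (QS a a)^2))
        = ∑ a, (ev a * (PS a a - QS a a)^2
            + 2*(ev a * ((∑ b, (PS a b)^2) - (PS a a)^2))
            + 2*(ev a * ((∑ b, (QS a b)^2) - (QS a a)^2))) := by
      rw [Finset.mul_sum, Finset.mul_sum, ← Finset.sum_add_distrib, ← Finset.sum_add_distrib]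
    calc (∑ a, ev a * (PS a a - QS a a)^2)
          + (2 * ∑ a, ev a * ((∑ b, (PS a b)^2) - (PS a a)^2)
            + 2 * ∑ a, ev a * ((∑ b, (QS a b)^2) - (QS a a)^2))
        = ∑ a, (ev a * (PS a a - QS a a)^2
            + 2*(ev a * ((∑ b, (PS a b)^2) - (PS a a)^2))
            + 2*(ev a * ((∑ b, (QS a b)^2) - (QS a a)^2))) := by
          rw [← e_comb]; ring
      _ ≤ ∑ a, ev a * (2 * F2 Sm) := Finset.sum_le_sum fun a _ => hper a
      _ = (∑ c, ev c) * (2 * F2 Sm) := by rw [← Finset.sum_mul]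
  -- STEP 5: totals
  have hSWX : F2 Sm + F2 Wm = F2 X := by
    have hpoint : ∀ i j, (Sm i j)^2 + (Wm i j)^2 = ((X i j)^2 + (X j i)^2)/2 := by
      intro i j
      rw [hSmdef, hWmdef]
      simp [Matrix.smul_apply, Matrix.add_apply, Matrix.sub_apply, Matrix.transpose_apply]
      ring
    have hsw : ∑ i, ∑ j, (X j i)^2 = ∑ i, ∑ j, (X i j)^2 := Finset.sum_comm
    unfold F2
    calc (∑ i, ∑ j, (Sm i j)^2) + ∑ i, ∑ j, (Wm i j)^2
        = ∑ i, ∑ j, ((Sm i j)^2 + (Wm i j)^2) := by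
          rw [← Finset.sum_add_distrib]
          exact Finset.sum_congr rfl fun i _ => by rw [← Finset.sum_add_distrib]
      _ = ∑ i, ∑ j, ((X i j)^2 + (X j i)^2)/2 := by
          exact Finset.sum_congr rfl fun i _ => Finset.sum_congr rfl fun j _ => hpoint i j
      _ = ((∑ i, ∑ j, (X i j)^2) + ∑ i, ∑ j, (X j i)^2)/2 :=
          double_sum_avg _ _
      _ = ∑ i, ∑ j, (X i j)^2 := by rw [hsw]; ring
  have hevF2Y : ∑ c, ev c = F2 Y := by
    rw [F2_eq_trace, hspecA]
    calc ∑ c, ev c = (diagonal ev).trace := by rw [Matrix.trace_diagonal]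
      _ = ((diagonal ev * Vᵀ) * V).trace := by
          rw [Matrix.mul_assoc, hV1, Matrix.mul_one]
      _ = (V * (diagonal ev * Vᵀ)).trace := (Matrix.trace_mul_comm _ _).symm
      _ = (V * diagonal ev * Vᵀ).trace := by rw [Matrix.mul_assoc]
  -- FINISH
  rw [hF2C, e_split, e_diag]
  have hchain : (∑ a, ev a * (PS a a - QS a a)^2)
      + ∑ a, ∑ b ∈ Finset.univ.erase a, (P a b * σ b - σ a * Q a b)^2
      ≤ (∑ c, ev c) * (2 * F2 Sm) + (∑ c, ev c) * (2 * F2 Wm) := by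
    have h1 : ∑ a, ∑ b ∈ Finset.univ.erase a, (P a b * σ b - σ a * Q a b)^2
        ≤ (∑ a, ∑ b ∈ Finset.univ.erase a, (ev a + ev b) * ((PS a b)^2 + (QS a b)^2))
          + ∑ a, ∑ b ∈ Finset.univ.erase a, (ev a + ev b) * ((PW a b)^2 + (QW a b)^2) := by
      calc ∑ a, ∑ b ∈ Finset.univ.erase a, (P a b * σ b - σ a * Q a b)^2
          ≤ ∑ a, ∑ b ∈ Finset.univ.erase a, (ev a + ev b) * ((P a b)^2 + (Q a b)^2) := h_cs
        _ = ∑ a, ∑ b ∈ Finset.univ.erase a,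
              (ev a + ev b) * ((PS a b)^2 + (PW a b)^2 + ((QS a b)^2 + (QW a b)^2)) :=
            e_sym_skew
        _ = _ := e_g2split
    linarith [h_sym_total, h_skew]
  calc (∑ a, ev a * (PS a a - QS a a)^2)
      + ∑ a, ∑ b ∈ Finset.univ.erase a, (P a b * σ b - σ a * Q a b)^2
      ≤ (∑ c, ev c) * (2 * F2 Sm) + (∑ c, ev c) * (2 * F2 Wm) := hchain
    _ = (∑ c, ev c) * (2 * (F2 Sm + F2 Wm)) := by ring
    _ = 2 * F2 X * F2 Y := by rw [hSWX, hevF2Y]; ring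

lemma eval_charpoly_neg (Y : Matrix (Fin d) (Fin d) ℝ) (ε : ℝ) :
    ((-Y).charpoly).eval ε = (Y + ε • (1 : Matrix (Fin d) (Fin d) ℝ)).det := by
  classical
  unfold Matrix.charpoly
  have h := RingHom.map_det (Polynomial.evalRingHom ε) (Matrix.charmatrix (-Y))
  have hmap : (Matrix.charmatrix (-Y)).map (Polynomial.evalRingHom ε)
      = Y + ε • (1 : Matrix (Fin d) (Fin d) ℝ) := by
    ext i j
    by_cases hij : i = j
    · subst hij
      simp [Matrix.charmatrix_apply_eq, Matrix.map_apply, Matrix.add_apply,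
        Matrix.smul_apply, Matrix.one_apply_eq]
      ring
    · simp [Matrix.charmatrix_apply_ne _ _ _ hij, Matrix.map_apply, Matrix.add_apply,
        Matrix.smul_apply, Matrix.one_apply_ne hij]
  calc (Polynomial.eval ε) (Matrix.charmatrix (-Y)).det
      = (Polynomial.evalRingHom ε) (Matrix.charmatrix (-Y)).det := rfl
    _ = ((Matrix.charmatrix (-Y)).map (Polynomial.evalRingHom ε)).det := h
    _ = (Y + ε • (1 : Matrix (Fin d) (Fin d) ℝ)).det := by rw [hmap]

/-- The Böttcher–Wenzel inequality, in sum-of-squares form. -/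
lemma BW_all (X Y : Matrix (Fin d) (Fin d) ℝ) :
    F2 (X*Y - Y*X) ≤ 2 * F2 X * F2 Y := by
  classical
  refine le_of_forall_pos_le_add fun δ hδ => ?_
  have hpne : (-Y).charpoly ≠ 0 := (Matrix.charpoly_monic _).ne_zero
  have hfin : {x : ℝ | ((-Y).charpoly).IsRoot x}.Finite :=
    Polynomial.finite_setOf_isRoot hpne
  set K : ℝ := ∑ i, ∑ j, (2*|Y i j| + 1) with hKdef
  have hK0 : 0 ≤ K := by
    apply Finset.sum_nonneg; intro i _
    apply Finset.sum_nonneg; intro j _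
    positivity
  set c : ℝ := 2 * F2 X * K with hcdef
  have hc0 : 0 ≤ c := by
    have := F2_nonneg X
    rw [hcdef]; positivity
  set m : ℝ := min 1 (δ / (c + 1)) with hmdef
  have hm : 0 < m := by
    rw [hmdef]
    apply lt_min one_pos
    positivity
  have hIooInf : (Set.Ioo (0:ℝ) m).Infinite := Set.infinite_coe_iff.mp (Set.Ioo.infinite hm)
  obtain ⟨ε, hεmem⟩ := (hIooInf.diff hfin).nonempty
  obtain ⟨hεIoo, hεroot⟩ := hεmem
  have hε0 : 0 < ε := hεIoo.1
  have hεm : ε < m := hεIoo.2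
  have hε1 : ε ≤ 1 := le_trans hεm.le (by rw [hmdef]; exact min_le_left _ _)
  have hεδ : ε ≤ δ / (c + 1) := le_trans hεm.le (by rw [hmdef]; exact min_le_right _ _)
  have hdet : (Y + ε • (1 : Matrix (Fin d) (Fin d) ℝ)).det ≠ 0 := by
    rw [← eval_charpoly_neg]
    exact fun h => hεroot h
  have hcomm : X*(Y + ε • (1 : Matrix (Fin d) (Fin d) ℝ))
      - (Y + ε • (1 : Matrix (Fin d) (Fin d) ℝ))*X = X*Y - Y*X := by
    rw [Matrix.mul_add, Matrix.add_mul, Matrix.mul_smul, Matrix.smul_mul,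
      Matrix.mul_one, Matrix.one_mul]
    abel
  have hYb : F2 (Y + ε • (1 : Matrix (Fin d) (Fin d) ℝ)) ≤ F2 Y + ε * K := by
    have hpt : ∀ i j, ((Y + ε • (1 : Matrix (Fin d) (Fin d) ℝ)) i j)^2
        ≤ (Y i j)^2 + ε * (2*|Y i j| + 1) := by
      intro i j
      by_cases hij : i = j
      · subst hij
        rw [Matrix.add_apply, Matrix.smul_apply, Matrix.one_apply_eq]
        simp only [smul_eq_mul, mul_one]
        have hy : Y i i ≤ |Y i i| := le_abs_self _
        nlinarith
      · rw [Matrix.add_apply, Matrix.smul_apply, Matrix.one_apply_ne hij]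
        have h0 : (0:ℝ) ≤ ε * (2*|Y i j| + 1) := by positivity
        simp only [smul_eq_mul, mul_zero, add_zero]
        linarith
    calc F2 (Y + ε • (1 : Matrix (Fin d) (Fin d) ℝ))
        ≤ ∑ i, ∑ j, ((Y i j)^2 + ε * (2*|Y i j| + 1)) := by
          unfold F2
          exact Finset.sum_le_sum fun i _ => Finset.sum_le_sum fun j _ => hpt i j
      _ = F2 Y + ε * K := by
          unfold F2
          rw [hKdef, Finset.mul_sum, ← Finset.sum_add_distrib]
          refine Finset.sum_congr rfl fun i _ => ?_
          rw [Finset.mul_sum, ← Finset.sum_add_distrib]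
  have hcore := core X (Y + ε • (1 : Matrix (Fin d) (Fin d) ℝ)) hdet
  rw [hcomm] at hcore
  have hεc : ε * c ≤ δ := by
    have h1 : ε * (c + 1) ≤ δ := by
      rw [← le_div_iff₀ (by positivity : (0:ℝ) < c + 1)]
      exact hεδ
    nlinarith
  have hFX : 0 ≤ F2 X := F2_nonneg X
  calc F2 (X*Y - Y*X) ≤ 2 * F2 X * F2 (Y + ε • (1 : Matrix (Fin d) (Fin d) ℝ)) := hcore
    _ ≤ 2 * F2 X * (F2 Y + ε * K) := by
        apply mul_le_mul_of_nonneg_left hYb (by positivity)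
    _ = 2 * F2 X * F2 Y + ε * c := by rw [hcdef]; ring
    _ ≤ 2 * F2 X * F2 Y + δ := by linarith

end BWproof

lemma frobNorm_sq_s13 {d : ℕ} (A : Matrix (Fin d) (Fin d) ℝ) :
    frobNorm A ^ 2 = BWproof.F2 A := by
  unfold frobNorm BWproof.F2
  rw [Real.sq_sqrt]
  positivity

/-- The Böttcher–Wenzel commutator bound `‖XY − YX‖_F² ≤ 2‖X‖_F²‖Y‖_F²` for all real
square matrices; in particular, the sectional curvature `K(X,Y) = (1/4)‖[X,Y]‖_F²` of
`SO(d)` at unit-Frobenius-norm tangent vectors is at most `1/2`. -/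
theorem stmt_13 (d : ℕ) :
    (∀ X Y : Matrix (Fin d) (Fin d) ℝ,
      frobNorm (X * Y - Y * X) ^ 2 ≤ 2 * frobNorm X ^ 2 * frobNorm Y ^ 2) ∧
    (∀ X Y : Matrix (Fin d) (Fin d) ℝ, frobNorm X = 1 → frobNorm Y = 1 →
      (1 / 4) * frobNorm (X * Y - Y * X) ^ 2 ≤ 1 / 2) := by
  have hmain : ∀ X Y : Matrix (Fin d) (Fin d) ℝ,
      frobNorm (X * Y - Y * X) ^ 2 ≤ 2 * frobNorm X ^ 2 * frobNorm Y ^ 2 := by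
    intro X Y
    rw [frobNorm_sq_s13, frobNorm_sq_s13, frobNorm_sq_s13]
    exact BWproof.BW_all X Y
  refine ⟨hmain, fun X Y hX hY => ?_⟩
  have h := hmain X Y
  rw [hX, hY] at h
  norm_num at h
  linarith
end

section
/- For d = 3 and nonzero skew-symmetric E ∈ ℝ^{3×3}, the distance from exp(E) to the identity satisfies ‖exp(E) − I₃‖_F ≥ √2 sin((√2/2)‖E‖_F) whenever (√2/2)‖E‖_F ≤ π. -/
open Matrix

open NormedSpace

lemma sq_sum_eq_trace (A : Matrix (Fin 3) (Fin 3) ℝ) :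
    ∑ i, ∑ j, (A i j) ^ 2 = Matrix.trace (Aᵀ * A) := by
  simp [Matrix.trace, Matrix.mul_apply, Matrix.diag, Fin.sum_univ_three]
  ring

set_option maxHeartbeats 1000000 in
/-- For a nonzero skew-symmetric `3 × 3` matrix `E` with `(√2/2)‖E‖_F ≤ π`,
`‖exp(E) − I‖_F ≥ √2 · sin((√2/2)‖E‖_F)`. -/
theorem stmt_16 (E : Matrix (Fin 3) (Fin 3) ℝ) (hE : Eᵀ = -E) (hne : E ≠ 0)
    (hbound : Real.sqrt 2 / 2 * frobNorm E ≤ Real.pi) :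
    Real.sqrt 2 * Real.sin (Real.sqrt 2 / 2 * frobNorm E) ≤
      frobNorm (NormedSpace.exp E - 1) := by
  have hskew : ∀ i j, E j i = -E i j := by
    intro i j
    have := congrFun (congrFun hE i) j
    simpa [Matrix.transpose_apply] using this
  set s : ℝ := E 0 1 ^ 2 + E 0 2 ^ 2 + E 1 2 ^ 2 with hs_def
  have hs0 : (0:ℝ) ≤ s := by positivity
  have hdiag : ∀ i, E i i = 0 := by
    intro i; have := hskew i i; linarith
  have h00 : E 0 0 = 0 := hdiag 0
  have h11 : E 1 1 = 0 := hdiag 1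
  have h22 : E 2 2 = 0 := hdiag 2
  have h10 := hskew 0 1
  have h20 := hskew 0 2
  have h21 := hskew 1 2
  have hcube : E ^ 3 = (-s) • E := by
    ext i j
    fin_cases i <;> fin_cases j <;>
      simp [pow_succ, Matrix.mul_apply, Fin.sum_univ_three, h00, h11, h22, h10, h20, h21,
        hs_def] <;> ring
  have hpow_odd : ∀ k : ℕ, E ^ (2 * k + 1) = ((-s) ^ k) • E := by
    intro k
    induction k with
    | zero => simp
    | succ n ih =>
        calc E ^ (2 * (n + 1) + 1) = E ^ (2 * n + 1) * E ^ 2 := by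
              rw [show 2 * (n + 1) + 1 = (2 * n + 1) + 2 from by ring, pow_add]
          _ = ((-s) ^ n) • (E * E ^ 2) := by rw [ih, smul_mul_assoc]
          _ = ((-s) ^ n) • (E ^ 3) := by rw [show E * E ^ 2 = E ^ 3 from (pow_succ' E 2).symm]
          _ = ((-s) ^ n) • ((-s) • E) := by rw [hcube]
          _ = ((-s) ^ (n + 1)) • E := by rw [smul_smul, ← pow_succ]
  have hpow_even : ∀ k : ℕ, E ^ (2 * k + 2) = ((-s) ^ k) • (E ^ 2) := by
    intro k
    calc E ^ (2 * k + 2) = E ^ (2 * k + 1) * E := by rw [pow_succ]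
      _ = ((-s) ^ k) • (E * E) := by rw [hpow_odd k, smul_mul_assoc]
      _ = ((-s) ^ k) • (E ^ 2) := by rw [sq]
  have htr1 : Matrix.trace E = 0 := by
    simp [Matrix.trace, Matrix.diag, Fin.sum_univ_three, hdiag]
  have htr2 : Matrix.trace (E ^ 2) = -2 * s := by
    simp [Matrix.trace, Matrix.diag, sq, Matrix.mul_apply, Fin.sum_univ_three,
      h00, h11, h22, h10, h20, h21, hs_def]
    ring
  set r : ℝ := Real.sqrt s with hr_def
  have hr2 : r ^ 2 = s := Real.sq_sqrt hs0
  have hsumsq : ∑ i, ∑ j, (E i j) ^ 2 = 2 * s := by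
    simp [Fin.sum_univ_three, h00, h11, h22, h10, h20, h21, hs_def]
    ring
  have hrfrob : Real.sqrt 2 / 2 * frobNorm E = r := by
    rw [frobNorm, hsumsq, Real.sqrt_mul (by norm_num : (0:ℝ) ≤ 2)]
    have h2 : Real.sqrt 2 * Real.sqrt 2 = 2 := Real.mul_self_sqrt (by norm_num)
    rw [hr_def]
    nlinarith [Real.sqrt_nonneg s, Real.sqrt_nonneg 2]
  -- trace of the exponential
  have htrsum : HasSum (fun n : ℕ => ((n.factorial : ℝ))⁻¹ • Matrix.trace (E ^ n))
      (Matrix.trace (exp E)) := by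
    letI : SeminormedRing (Matrix (Fin 3) (Fin 3) ℝ) := Matrix.linftyOpSemiNormedRing
    letI : NormedRing (Matrix (Fin 3) (Fin 3) ℝ) := Matrix.linftyOpNormedRing
    letI : NormedAlgebra ℝ (Matrix (Fin 3) (Fin 3) ℝ) := Matrix.linftyOpNormedAlgebra
    have hsum : HasSum (fun n : ℕ => ((n.factorial : ℝ))⁻¹ • E ^ n) (exp E) :=
      exp_series_hasSum_exp' E
    have hmap := (LinearMap.toContinuousLinearMap
      (Matrix.traceLinearMap (Fin 3) ℝ ℝ)).hasSum hsum
    simpa [LinearMap.coe_toContinuousLinearMap', _root_.map_smul] using hmap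
  have hcos : HasSum (fun k : ℕ => (-1) ^ k * r ^ (2 * k) / ((2 * k).factorial : ℝ))
      (Real.cos r) := Real.hasSum_cos r
  have heven : HasSum (fun k : ℕ => (((2 * k).factorial : ℝ))⁻¹ • Matrix.trace (E ^ (2 * k)))
      (2 * Real.cos r + 1) := by
    have h1 := hcos.mul_left 2
    have h2 : HasSum (fun k : ℕ => if k = 0 then (1:ℝ) else 0) 1 := hasSum_ite_eq 0 1
    have h3 := h1.add h2
    have hfeq : (fun k : ℕ => (((2 * k).factorial : ℝ))⁻¹ • Matrix.trace (E ^ (2 * k)))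
        = fun k : ℕ => 2 * ((-1) ^ k * r ^ (2 * k) / ((2 * k).factorial : ℝ))
            + (if k = 0 then (1:ℝ) else 0) := by
      funext k
      match k with
      | 0 => simp; norm_num
      | (j + 1) =>
          have e1 : 2 * (j + 1) = 2 * j + 2 := by ring
          have htr : Matrix.trace (E ^ (2 * (j + 1))) = (-1) ^ (j + 1) * (2 * s ^ (j + 1)) := by
            rw [e1, hpow_even j, Matrix.trace_smul, htr2, neg_pow, smul_eq_mul]
            ring
          have hrpow : r ^ (2 * (j + 1)) = s ^ (j + 1) := by rw [pow_mul, hr2]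
          rw [htr, hrpow, smul_eq_mul, if_neg (Nat.succ_ne_zero j), add_zero]
          have hfac : ((2 * (j + 1)).factorial : ℝ) ≠ 0 := by positivity
          field_simp
    rw [hfeq]
    exact h3
  have hodd : HasSum (fun k : ℕ => (((2 * k + 1).factorial : ℝ))⁻¹ • Matrix.trace (E ^ (2 * k + 1)))
      0 := by
    have : (fun k : ℕ => (((2 * k + 1).factorial : ℝ))⁻¹ • Matrix.trace (E ^ (2 * k + 1)))
        = fun _ => (0:ℝ) := by
      funext k
      rw [hpow_odd k]
      simp [htr1]
    rw [this]
    exact hasSum_zero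
  have htrace : Matrix.trace (exp E) = 2 * Real.cos r + 1 := by
    have hall : HasSum (fun n : ℕ => ((n.factorial : ℝ))⁻¹ • Matrix.trace (E ^ n))
        (2 * Real.cos r + 1 + 0) :=
      HasSum.even_add_odd (f := fun n : ℕ => ((n.factorial : ℝ))⁻¹ • Matrix.trace (E ^ n))
        heven hodd
    rw [add_zero] at hall
    exact htrsum.unique hall
  -- orthogonality of exp E
  have horth : (exp E)ᵀ * exp E = 1 := by
    rw [← Matrix.exp_transpose, hE,
      ← Matrix.exp_add_of_commute (-E) E ((Commute.refl E).neg_left)]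
    simp
  -- the Frobenius norm squared of exp E - 1
  have hsq : ∑ i, ∑ j, ((exp E - 1) i j) ^ 2 = 4 - 4 * Real.cos r := by
    rw [sq_sum_eq_trace]
    have hexpand : (exp E - 1)ᵀ * (exp E - 1)
        = (exp E)ᵀ * exp E - (exp E)ᵀ - exp E + 1 := by
      rw [Matrix.transpose_sub, Matrix.transpose_one]
      noncomm_ring
    rw [hexpand, horth]
    rw [Matrix.trace_add, Matrix.trace_sub, Matrix.trace_sub, Matrix.trace_transpose,
      htrace]
    simp [Matrix.trace_one]
    ring
  have hrπ : r ≤ Real.pi := by rw [← hrfrob]; exact hbound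
  have hrnn : (0:ℝ) ≤ r := Real.sqrt_nonneg s
  have hsin : 0 ≤ Real.sin r := Real.sin_nonneg_of_nonneg_of_le_pi hrnn hrπ
  rw [hrfrob, frobNorm, hsq]
  have key : Real.sqrt 2 * Real.sin r = Real.sqrt (2 * Real.sin r ^ 2) := by
    rw [Real.sqrt_mul (by norm_num : (0:ℝ) ≤ 2), Real.sqrt_sq hsin]
  rw [key]
  apply Real.sqrt_le_sqrt
  nlinarith [Real.sin_sq_add_cos_sq r, Real.cos_le_one r, Real.neg_one_le_cos r]
end
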